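/- arXiv:1905.12379 — 5 statements merged into one kernel-verified Lean document; each statement's English description precedes it below -/
import Mathlib

section
/- There exists an optimal solution to the K-facility reallocation problem on the real line in which, at every stage t and for every facility k, the facility's position belongs to the finite set consisting of all agent positions over all stages together with the initial facility positions. -/
/-- Total cost of a solution `x` to the K-facility reallocation problem on the line:
moving cost plus connection cost over stages 1..T. -/
noncomputable def reallocCost (K T n : ℕ) (hK : 0 < K) (α : ℕ → Fin n → ℝ)
    (x : ℕ → Fin K → ℝ) : ℝ :=
  ∑ t ∈ Finset.Icc 1 T,
    (∑ k, |x t k - x (t - 1) k| +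
      ∑ i, Finset.univ.inf'
        (Finset.univ_nonempty_iff.mpr (Fin.pos_iff_nonempty.mp hK))
        (fun k : Fin K => |α t i - x t k|))

open Finset MeasureTheory

namespace Realloc

section

variable (P : Finset ℝ) (hP : P.Nonempty)

noncomputable def cl (y : ℝ) : ℝ := max (P.min' hP) (min (P.max' hP) y)

lemma min'_le_max' : P.min' hP ≤ P.max' hP := P.min'_le _ (P.max'_mem hP)

lemma cl_le (y : ℝ) : cl P hP y ≤ P.max' hP :=
  max_le (min'_le_max' P hP) (min_le_left _ _)

lemma le_cl (y : ℝ) : P.min' hP ≤ cl P hP y := le_max_left _ _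

lemma cl_fix {q : ℝ} (hq : q ∈ P) : cl P hP q = q := by
  unfold cl
  rw [min_eq_right (P.le_max' q hq), max_eq_right (P.min'_le q hq)]

lemma cl_mono {a b : ℝ} (h : a ≤ b) : cl P hP a ≤ cl P hP b :=
  max_le_max le_rfl (min_le_min le_rfl h)

lemma cl_lip (a b : ℝ) : |cl P hP a - cl P hP b| ≤ |a - b| := by
  unfold cl
  rw [max_comm (P.min' hP) (min _ a), max_comm (P.min' hP) (min _ b)]
  refine (abs_max_sub_max_le_abs _ _ _).trans ?_
  have := abs_min_sub_min_le_max (P.max' hP) a (P.max' hP) b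
  simpa using this

lemma lo_nonempty (y : ℝ) : (P.filter (fun q => q ≤ cl P hP y)).Nonempty :=
  ⟨P.min' hP, mem_filter.2 ⟨P.min'_mem hP, le_cl P hP y⟩⟩

lemma hi_nonempty (y : ℝ) : (P.filter (fun q => cl P hP y ≤ q)).Nonempty :=
  ⟨P.max' hP, mem_filter.2 ⟨P.max'_mem hP, cl_le P hP y⟩⟩

noncomputable def lo (y : ℝ) : ℝ :=
  (P.filter (fun q => q ≤ cl P hP y)).max' (lo_nonempty P hP y)

noncomputable def hi (y : ℝ) : ℝ :=
  (P.filter (fun q => cl P hP y ≤ q)).min' (hi_nonempty P hP y)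

lemma lo_mem (y : ℝ) : lo P hP y ∈ P :=
  (mem_filter.1 ((P.filter _).max'_mem _)).1

lemma hi_mem (y : ℝ) : hi P hP y ∈ P :=
  (mem_filter.1 ((P.filter _).min'_mem _)).1

lemma lo_le_cl (y : ℝ) : lo P hP y ≤ cl P hP y :=
  (mem_filter.1 ((P.filter _).max'_mem (lo_nonempty P hP y))).2

lemma cl_le_hi (y : ℝ) : cl P hP y ≤ hi P hP y :=
  (mem_filter.1 ((P.filter _).min'_mem (hi_nonempty P hP y))).2

lemma le_lo {q y : ℝ} (hq : q ∈ P) (h : q ≤ cl P hP y) : q ≤ lo P hP y :=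
  Finset.le_max' (P.filter (fun q => q ≤ cl P hP y)) q (mem_filter.2 ⟨hq, h⟩)

lemma hi_le {q y : ℝ} (hq : q ∈ P) (h : cl P hP y ≤ q) : hi P hP y ≤ q :=
  Finset.min'_le (P.filter (fun q => cl P hP y ≤ q)) q (mem_filter.2 ⟨hq, h⟩)

lemma lo_le_hi (y : ℝ) : lo P hP y ≤ hi P hP y :=
  (lo_le_cl P hP y).trans (cl_le_hi P hP y)

lemma lo_fix {q : ℝ} (hq : q ∈ P) : lo P hP q = q := by
  have h1 := lo_le_cl P hP q
  have h2 := le_lo P hP hq (le_of_eq (cl_fix P hP hq).symm)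
  rw [cl_fix P hP hq] at h1
  linarith

lemma hi_fix {q : ℝ} (hq : q ∈ P) : hi P hP q = q := by
  have h1 := cl_le_hi P hP q
  have h2 := hi_le P hP hq (le_of_eq (cl_fix P hP hq))
  rw [cl_fix P hP hq] at h1
  linarith

noncomputable def tau (y : ℝ) : ℝ :=
  if hi P hP y = lo P hP y then 0
  else (cl P hP y - lo P hP y) / (hi P hP y - lo P hP y)

lemma tau_nonneg (y : ℝ) : 0 ≤ tau P hP y := by
  unfold tau
  split
  · exact le_rfl
  · exact div_nonneg (by linarith [lo_le_cl P hP y]) (by linarith [lo_le_hi P hP y])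

lemma tau_le_one (y : ℝ) : tau P hP y ≤ 1 := by
  unfold tau
  split
  · norm_num
  · rename_i h
    have hlt : lo P hP y < hi P hP y := lt_of_le_of_ne (lo_le_hi P hP y) (Ne.symm h)
    rw [div_le_one (by linarith)]
    linarith [cl_le_hi P hP y]

lemma lo_add_tau (y : ℝ) : lo P hP y + (hi P hP y - lo P hP y) * tau P hP y = cl P hP y := by
  unfold tau
  split
  · rename_i h
    have h1 := lo_le_cl P hP y
    have h2 := cl_le_hi P hP y
    rw [h] at h2
    ring_nf
    linarith
  · rename_i h
    have hlt : lo P hP y < hi P hP y := lt_of_le_of_ne (lo_le_hi P hP y) (Ne.symm h)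
    rw [mul_div_cancel₀ _ (by linarith : hi P hP y - lo P hP y ≠ 0)]
    ring

noncomputable def rf (θ y : ℝ) : ℝ := if θ ≤ tau P hP y then hi P hP y else lo P hP y

lemma rf_mem (θ y : ℝ) : rf P hP θ y ∈ P := by
  unfold rf; split
  · exact hi_mem P hP y
  · exact lo_mem P hP y

lemma rf_fix {q : ℝ} (hq : q ∈ P) {θ : ℝ} (hθ : 0 < θ) : rf P hP θ q = q := by
  unfold rf
  have ht : tau P hP q = 0 := by
    unfold tau
    rw [if_pos (by rw [hi_fix P hP hq, lo_fix P hP hq])]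
  rw [ht, if_neg (by linarith), lo_fix P hP hq]

lemma lo_le_rf (θ y : ℝ) : lo P hP y ≤ rf P hP θ y := by
  unfold rf; split
  · exact lo_le_hi P hP y
  · exact le_rfl

lemma rf_le_hi (θ y : ℝ) : rf P hP θ y ≤ hi P hP y := by
  unfold rf; split
  · exact le_rfl
  · exact lo_le_hi P hP y

lemma rf_mono {a b : ℝ} (h : a ≤ b) (θ : ℝ) : rf P hP θ a ≤ rf P hP θ b := by
  have hcab : cl P hP a ≤ cl P hP b := cl_mono P hP h
  by_cases h1 : hi P hP a ≤ lo P hP b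
  · exact (rf_le_hi P hP θ a).trans (h1.trans (lo_le_rf P hP θ b))
  · push_neg at h1
    have hhi : hi P hP a = hi P hP b := by
      have hcb : cl P hP b ≤ hi P hP a := by
        by_contra hc
        push_neg at hc
        exact absurd (le_lo P hP (hi_mem P hP a) hc.le) (not_le.2 h1)
      exact le_antisymm (hi_le P hP (hi_mem P hP b) (hcab.trans (cl_le_hi P hP b)))
        (hi_le P hP (hi_mem P hP a) hcb)
    have hlo : lo P hP a = lo P hP b := by
      have hlb : lo P hP b ≤ cl P hP a := by
        by_contra hc
        push_neg at hc
        exact absurd (hi_le P hP (lo_mem P hP b) hc.le) (not_le.2 h1)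
      exact le_antisymm (le_lo P hP (lo_mem P hP a) ((lo_le_cl P hP a).trans hcab))
        (le_lo P hP (lo_mem P hP b) hlb)
    have htau : tau P hP a ≤ tau P hP b := by
      unfold tau
      rw [hhi, hlo]
      split
      · exact le_rfl
      · rename_i hne
        have hlt : lo P hP b < hi P hP b := lt_of_le_of_ne (lo_le_hi P hP b) (Ne.symm hne)
        gcongr <;> linarith
    unfold rf
    split
    · rename_i hθ
      rw [if_pos (hθ.trans htau), hhi]
    · rw [hlo]
      exact lo_le_rf P hP θ b


noncomputable def mu : Measure ℝ := volume.restrict (Set.Ioc (0:ℝ) 1)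

instance : IsProbabilityMeasure mu :=
  ⟨by simp [mu, Measure.restrict_apply_univ, Real.volume_Ioc]⟩

lemma rf_eq (y : ℝ) : (fun θ => rf P hP θ y) =
    fun θ => lo P hP y + (Set.Iic (tau P hP y)).indicator
      (fun _ => hi P hP y - lo P hP y) θ := by
  funext θ
  unfold rf
  by_cases h : θ ≤ tau P hP y
  · rw [if_pos h, Set.indicator_of_mem (Set.mem_Iic.2 h)]
    ring
  · rw [if_neg h, Set.indicator_of_notMem (by simpa using h)]
    ring

lemma integrable_rf (y : ℝ) : Integrable (fun θ => rf P hP θ y) mu := by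
  rw [rf_eq]
  exact (integrable_const _).add ((integrable_const _).indicator measurableSet_Iic)

lemma integral_rf (y : ℝ) : ∫ θ, rf P hP θ y ∂mu = cl P hP y := by
  rw [rf_eq]
  rw [integral_add (integrable_const _) ((integrable_const _).indicator measurableSet_Iic)]
  rw [integral_indicator_const _ measurableSet_Iic, integral_const]
  have hmeas : mu (Set.Iic (tau P hP y)) = ENNReal.ofReal (tau P hP y) := by
    have h0 := tau_nonneg P hP y
    have h1 := tau_le_one P hP y
    rw [mu, Measure.restrict_apply measurableSet_Iic]
    have : Set.Iic (tau P hP y) ∩ Set.Ioc (0:ℝ) 1 = Set.Ioc 0 (tau P hP y) := by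
      ext θ
      simp only [Set.mem_inter_iff, Set.mem_Iic, Set.mem_Ioc]
      constructor
      · rintro ⟨ha, hb, hc⟩; exact ⟨hb, ha⟩
      · rintro ⟨ha, hb⟩; exact ⟨hb, ha, hb.trans h1⟩
    rw [this, Real.volume_Ioc]
    simp
  rw [measureReal_def, measureReal_def, hmeas, measure_univ, ENNReal.toReal_ofReal (tau_nonneg P hP y)]
  simp only [ENNReal.toReal_one, one_smul, smul_eq_mul]
  have := lo_add_tau P hP y
  linarith

lemma integrable_abs_rf (a b : ℝ) :
    Integrable (fun θ => |rf P hP θ a - rf P hP θ b|) mu :=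
  ((integrable_rf P hP a).sub (integrable_rf P hP b)).abs

lemma integral_abs_rf_of_le {a b : ℝ} (h : b ≤ a) :
    ∫ θ, |rf P hP θ a - rf P hP θ b| ∂mu = |cl P hP a - cl P hP b| := by
  have heq : (fun θ => |rf P hP θ a - rf P hP θ b|) =
      fun θ => rf P hP θ a - rf P hP θ b :=
    funext fun θ => abs_of_nonneg (sub_nonneg.2 (rf_mono P hP h θ))
  rw [heq, integral_sub (integrable_rf P hP a) (integrable_rf P hP b),
    integral_rf, integral_rf, abs_of_nonneg (sub_nonneg.2 (cl_mono P hP h))]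

lemma integral_abs_rf (a b : ℝ) :
    ∫ θ, |rf P hP θ a - rf P hP θ b| ∂mu = |cl P hP a - cl P hP b| := by
  rcases le_total b a with h | h
  · exact integral_abs_rf_of_le P hP h
  · have heq : (fun θ => |rf P hP θ a - rf P hP θ b|) =
        fun θ => |rf P hP θ b - rf P hP θ a| := funext fun θ => abs_sub_comm _ _
    rw [heq, integral_abs_rf_of_le P hP h, abs_sub_comm]


end

lemma round (P : Finset ℝ) (hP : P.Nonempty) (K T n : ℕ) (hK : 0 < K) (x0 : Fin K → ℝ) (α : ℕ → Fin n → ℝ)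
    (hα : ∀ t ∈ Finset.Icc 1 T, ∀ i : Fin n, α t i ∈ P) (hx0 : ∀ k, x0 k ∈ P)
    (y : ℕ → Fin K → ℝ) (hy : y 0 = x0) :
    ∃ z : ℕ → Fin K → ℝ, z 0 = x0 ∧ (∀ t ∈ Finset.Icc 1 T, ∀ k, z t k ∈ P) ∧
      reallocCost K T n hK α z ≤ reallocCost K T n hK α y := by
  have hne : (Finset.univ : Finset (Fin K)).Nonempty :=
    Finset.univ_nonempty_iff.mpr (Fin.pos_iff_nonempty.mp hK)
  choose κ hκmem hκ using fun (t : ℕ) (i : Fin n) =>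
    Finset.exists_mem_eq_inf' hne (fun k => |α t i - y t k|)
  set Z : ℝ → ℕ → Fin K → ℝ :=
    fun θ t k => if t = 0 then x0 k else rf P hP θ (y t k) with hZ
  have hZ0 : ∀ θ k, Z θ 0 k = x0 k := by intro θ k; simp [hZ]
  have hZt : ∀ t, t ≠ 0 → ∀ θ k, Z θ t k = rf P hP θ (y t k) := by
    intro t ht θ k
    simp only [hZ]
    rw [if_neg ht]
  set G : ℝ → ℝ := fun θ => ∑ t ∈ Finset.Icc 1 T,
    (∑ k, |Z θ t k - Z θ (t-1) k| + ∑ i, |α t i - Z θ t (κ t i)|) with hG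
  have hne0 : ∀ t, t ∈ Finset.Icc 1 T → t ≠ 0 := by
    intro t ht
    rcases Finset.mem_Icc.1 ht with ⟨h1, _⟩
    omega
  have hint : ∀ t ∈ Finset.Icc 1 T, ∀ k : Fin K,
      Integrable (fun θ => |Z θ t k - Z θ (t-1) k|) mu := by
    intro t ht k
    by_cases h : t - 1 = 0
    · have heq : (fun θ => |Z θ t k - Z θ (t-1) k|) =
          fun θ => |rf P hP θ (y t k) - x0 k| := by
        funext θ
        rw [hZt t (hne0 t ht) θ k, h, hZ0]
      rw [heq]
      exact ((integrable_rf P hP _).sub (integrable_const _)).abs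
    · have heq : (fun θ => |Z θ t k - Z θ (t-1) k|) =
          fun θ => |rf P hP θ (y t k) - rf P hP θ (y (t-1) k)| := by
        funext θ
        rw [hZt t (hne0 t ht) θ k, hZt (t-1) h θ k]
      rw [heq]
      exact integrable_abs_rf P hP _ _
  have hint2 : ∀ t ∈ Finset.Icc 1 T, ∀ i : Fin n,
      Integrable (fun θ => |α t i - Z θ t (κ t i)|) mu := by
    intro t ht i
    have heq : (fun θ => |α t i - Z θ t (κ t i)|) =
        fun θ => |α t i - rf P hP θ (y t (κ t i))| := by
      funext θ; rw [hZt t (hne0 t ht) θ _]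
    rw [heq]
    exact ((integrable_const _).sub (integrable_rf P hP _)).abs
  have hGint : Integrable G mu := by
    apply integrable_finset_sum
    intro t ht
    exact (integrable_finset_sum _ (fun k _ => hint t ht k)).add
      (integrable_finset_sum _ (fun i _ => hint2 t ht i))
  have h1 : ∀ θ, reallocCost K T n hK α (Z θ) ≤ G θ := by
    intro θ
    unfold reallocCost
    apply Finset.sum_le_sum
    intro t ht
    apply add_le_add le_rfl
    apply Finset.sum_le_sum
    intro i _
    exact Finset.inf'_le _ (Finset.mem_univ (κ t i))
  have h3 : ∫ θ, G θ ∂mu ≤ reallocCost K T n hK α y := by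
    have hsum : ∫ θ, G θ ∂mu = ∑ t ∈ Finset.Icc 1 T,
        ((∑ k, ∫ θ, |Z θ t k - Z θ (t-1) k| ∂mu) +
         (∑ i, ∫ θ, |α t i - Z θ t (κ t i)| ∂mu)) := by
      have e1 : ∫ θ, G θ ∂mu = ∑ t ∈ Finset.Icc 1 T, ∫ θ,
          (∑ k, |Z θ t k - Z θ (t-1) k| + ∑ i, |α t i - Z θ t (κ t i)|) ∂mu :=
        integral_finset_sum _ (fun t ht =>
          (integrable_finset_sum _ (fun k _ => hint t ht k)).add
            (integrable_finset_sum _ (fun i _ => hint2 t ht i)))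
      rw [e1]
      refine Finset.sum_congr rfl (fun t ht => ?_)
      rw [integral_add (integrable_finset_sum _ (fun k _ => hint t ht k))
        (integrable_finset_sum _ (fun i _ => hint2 t ht i))]
      rw [integral_finset_sum _ (fun k _ => hint t ht k),
        integral_finset_sum _ (fun i _ => hint2 t ht i)]
    rw [hsum]
    unfold reallocCost
    apply Finset.sum_le_sum
    intro t ht
    apply add_le_add
    · apply Finset.sum_le_sum
      intro k _
      by_cases h : t - 1 = 0
      · have heq : ∫ θ, |Z θ t k - Z θ (t-1) k| ∂mu =
            ∫ θ, |rf P hP θ (y t k) - rf P hP θ (x0 k)| ∂mu := by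
          refine setIntegral_congr_fun measurableSet_Ioc (fun θ hθ => ?_)
          rw [hZt t (hne0 t ht) θ k, h, hZ0, rf_fix P hP (hx0 k) hθ.1]
        rw [heq, integral_abs_rf, cl_fix P hP (hx0 k), h, hy]
        have := cl_lip P hP (y t k) (x0 k)
        rw [cl_fix P hP (hx0 k)] at this
        exact this
      · have heq : ∫ θ, |Z θ t k - Z θ (t-1) k| ∂mu =
            ∫ θ, |rf P hP θ (y t k) - rf P hP θ (y (t-1) k)| ∂mu := by
          refine setIntegral_congr_fun measurableSet_Ioc (fun θ hθ => ?_)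
          rw [hZt t (hne0 t ht) θ k, hZt (t-1) h θ k]
        rw [heq, integral_abs_rf]
        exact cl_lip P hP _ _
    · apply Finset.sum_le_sum
      intro i _
      have heq : ∫ θ, |α t i - Z θ t (κ t i)| ∂mu =
          ∫ θ, |rf P hP θ (α t i) - rf P hP θ (y t (κ t i))| ∂mu := by
        refine setIntegral_congr_fun measurableSet_Ioc (fun θ hθ => ?_)
        rw [hZt t (hne0 t ht) θ _, rf_fix P hP (hα t ht i) hθ.1]
      rw [heq, integral_abs_rf]
      have hb : |cl P hP (α t i) - cl P hP (y t (κ t i))| ≤ |α t i - y t (κ t i)| :=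
        cl_lip P hP _ _
      rw [hκ t i]
      exact hb
  obtain ⟨θ, hθ⟩ := exists_le_integral (μ := mu) hGint
  refine ⟨Z θ, funext (hZ0 θ), fun t ht k => ?_, (h1 θ).trans (hθ.trans h3)⟩
  rw [hZt t (hne0 t ht) θ k]
  exact rf_mem P hP θ (y t k)

end Realloc

lemma cost_congr {K T n : ℕ} {hK : 0 < K} {α : ℕ → Fin n → ℝ} {x x' : ℕ → Fin K → ℝ}
    (h0 : x 0 = x' 0) (h : ∀ t ∈ Finset.Icc 1 T, x t = x' t) :
    reallocCost K T n hK α x = reallocCost K T n hK α x' := by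
  unfold reallocCost
  refine Finset.sum_congr rfl fun t ht => ?_
  have hx : x t = x' t := h t ht
  have hx' : x (t - 1) = x' (t - 1) := by
    rcases Finset.mem_Icc.1 ht with ⟨h1, h2⟩
    by_cases hh : t - 1 = 0
    · rw [hh]; exact h0
    · exact h (t - 1) (Finset.mem_Icc.2 ⟨by omega, by omega⟩)
  rw [hx, hx']


/-- There exists an optimal solution whose facility positions at every stage
belong to the set of all agent positions (over all stages) together with the
initial facility positions. -/
theorem stmt0 (K T n : ℕ) (hK : 0 < K) (x0 : Fin K → ℝ) (α : ℕ → Fin n → ℝ) :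
    ∃ x : ℕ → Fin K → ℝ, x 0 = x0 ∧
      (∀ y : ℕ → Fin K → ℝ, y 0 = x0 →
        reallocCost K T n hK α x ≤ reallocCost K T n hK α y) ∧
      (∀ t ∈ Finset.Icc 1 T, ∀ k : Fin K,
        (∃ s ∈ Finset.Icc 1 T, ∃ i : Fin n, x t k = α s i) ∨
        (∃ k' : Fin K, x t k = x0 k')) := by
  classical
  set P : Finset ℝ := ((Finset.Icc 1 T ×ˢ (Finset.univ : Finset (Fin n))).image
    fun p => α p.1 p.2) ∪ Finset.univ.image x0 with hPdef
  have hx0 : ∀ k, x0 k ∈ P := fun k =>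
    Finset.mem_union_right _ (Finset.mem_image_of_mem x0 (Finset.mem_univ k))
  have hα : ∀ t ∈ Finset.Icc 1 T, ∀ i : Fin n, α t i ∈ P := fun t ht i =>
    Finset.mem_union_left _ (Finset.mem_image.2
      ⟨(t, i), Finset.mem_product.2 ⟨ht, Finset.mem_univ i⟩, rfl⟩)
  have hP : P.Nonempty := ⟨x0 ⟨0, hK⟩, hx0 _⟩
  let A := (↥(Finset.Icc 1 T) → Fin K → ↥P)
  have hA : Nonempty A := ⟨fun _ _ => ⟨x0 ⟨0, hK⟩, hx0 _⟩⟩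
  let emb : A → ℕ → Fin K → ℝ := fun g t k =>
    if h : t ∈ Finset.Icc 1 T then (g ⟨t, h⟩ k : ℝ) else x0 k
  have hemb0 : ∀ g, emb g 0 = x0 := by
    intro g; funext k
    have h0 : (0:ℕ) ∉ Finset.Icc 1 T := by simp
    simp [emb, h0]
  have hembt : ∀ g, ∀ t (ht : t ∈ Finset.Icc 1 T), ∀ k, emb g t k = (g ⟨t, ht⟩ k : ℝ) := by
    intro g t ht k
    simp only [emb]
    exact dif_pos ht
  obtain ⟨g0, -, hg0⟩ := Finset.exists_min_image Finset.univ
    (fun g : A => reallocCost K T n hK α (emb g)) ⟨Classical.arbitrary A, Finset.mem_univ _⟩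
  refine ⟨emb g0, hemb0 g0, ?_, ?_⟩
  · intro y hy
    obtain ⟨z, hz0, hzmem, hzcost⟩ := Realloc.round P hP K T n hK x0 α hα hx0 y hy
    let g : A := fun t k => ⟨z t.1 k, hzmem t.1 t.2 k⟩
    have hcong : reallocCost K T n hK α (emb g) = reallocCost K T n hK α z := by
      apply cost_congr
      · rw [hemb0, hz0]
      · intro t ht
        funext k
        rw [hembt g t ht k]
    calc reallocCost K T n hK α (emb g0) ≤ reallocCost K T n hK α (emb g) :=
           hg0 g (Finset.mem_univ g)
      _ = reallocCost K T n hK α z := hcong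
      _ ≤ reallocCost K T n hK α y := hzcost
  · intro t ht k
    have hmem : emb g0 t k ∈ P := by
      rw [hembt g0 t ht k]
      exact (g0 ⟨t, ht⟩ k).2
    rcases Finset.mem_union.1 hmem with h | h
    · obtain ⟨p, hp, hpe⟩ := Finset.mem_image.1 h
      obtain ⟨hp1, -⟩ := Finset.mem_product.1 hp
      exact Or.inl ⟨p.1, hp1, p.2, hpe.symm⟩
    · obtain ⟨k', -, hk'⟩ := Finset.mem_image.1 h
      exact Or.inr ⟨k', hk'.symm⟩
end

section
/- For a single agent at a fixed stage in an optimal fractional LP solution, the set of nodes the agent fractionally connects to (with assignment values in {0, 1/N}) forms a consecutive block of N nodes among the nodes carrying positive facility mass, ordered left to right on the line; consequently the agent's fractional connection cost equals (1/N) times the sum of distances to these N consecutive nodes. -/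
/-- In an optimal fractional solution, a single agent's assignment (with values
in {0, 1/N}) covers a consecutive block of N of the nodes `Y 0 < Y 1 < ... < Y (K*N - 1)`
carrying positive facility mass, and its fractional connection cost equals
(1/N) times the sum of distances to these N consecutive nodes. -/
theorem stmt1 (K N : ℕ) (hK : 0 < K) (hN : 0 < N) (a : ℝ) (Y : ℕ → ℝ)
    (hY : ∀ i j : ℕ, i < j → j < K * N → Y i < Y j)
    (w : ℕ → ℝ)
    (hw01 : ∀ j < K * N, w j = 0 ∨ w j = 1 / N)
    (hwsum : ∑ j ∈ Finset.range (K * N), w j = 1)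
    (hopt : ∀ w' : ℕ → ℝ, (∀ j < K * N, w' j = 0 ∨ w' j = 1 / N) →
      (∑ j ∈ Finset.range (K * N), w' j = 1) →
      ∑ j ∈ Finset.range (K * N), |a - Y j| * w j ≤
        ∑ j ∈ Finset.range (K * N), |a - Y j| * w' j) :
    ∃ ℓ : ℕ, ℓ + N ≤ K * N ∧
      (∀ j < K * N, (w j = 1 / N ↔ ℓ ≤ j ∧ j < ℓ + N)) ∧
      ∑ j ∈ Finset.range (K * N), |a - Y j| * w j
        = (1 / N) * ∑ h ∈ Finset.Ico ℓ (ℓ + N), |a - Y h| := by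
  have hNR : (0:ℝ) < N := by exact_mod_cast hN
  set S : Finset ℕ := (Finset.range (K*N)).filter (fun j => w j = 1/N) with hS
  have hmemS : ∀ j, j ∈ S ↔ j < K*N ∧ w j = 1/N := by
    intro j; simp [hS, Finset.mem_filter, Finset.mem_range]
  have hw0 : ∀ j, j < K*N → j ∉ S → w j = 0 := by
    intro j hj hjS
    rcases hw01 j hj with h | h
    · exact h
    · exact absurd ((hmemS j).2 ⟨hj, h⟩) hjS
  -- key swap inequality from optimality
  have key : ∀ j k : ℕ, j < K*N → k < K*N → j ≠ k → w j = 0 → w k = 1/N →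
      |a - Y k| ≤ |a - Y j| := by
    intro j k hj hk hjk hwj hwk
    set w' : ℕ → ℝ := fun i => if i = j then 1/N else if i = k then 0 else w i with hw'
    have hdiff : ∀ c : ℕ → ℝ, ∑ i ∈ Finset.range (K*N), c i * w' i
        = ∑ i ∈ Finset.range (K*N), c i * w i + c j * (1/N) - c k * (1/N) := by
      intro c
      have hsub : ({j, k} : Finset ℕ) ⊆ Finset.range (K*N) := by
        intro x hx
        simp only [Finset.mem_insert, Finset.mem_singleton] at hx
        rcases hx with rfl | rfl <;> simp [Finset.mem_range, hj, hk]
      have h1 : ∑ i ∈ Finset.range (K*N), (c i * w' i - c i * w i)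
          = c j * (1/N) - c k * (1/N) := by
        rw [← Finset.sum_subset hsub]
        · rw [Finset.sum_pair hjk]
          simp only [hw', if_pos rfl, if_neg hjk, if_neg (Ne.symm hjk)]
          rw [hwj, hwk]
          simp; ring
        · intro x _ hx
          simp only [Finset.mem_insert, Finset.mem_singleton, not_or] at hx
          simp [hw', hx.1, hx.2]
      rw [Finset.sum_sub_distrib] at h1
      linarith
    have hw'01 : ∀ i < K * N, w' i = 0 ∨ w' i = 1 / N := by
      intro i hi
      by_cases h1 : i = j
      · right; simp [hw', h1]
      · by_cases h2 : i = k
        · left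
          simp [hw', h2, Ne.symm hjk]
        · simpa [hw', h1, h2] using hw01 i hi
    have hw'sum : ∑ i ∈ Finset.range (K*N), w' i = 1 := by
      have h := hdiff (fun _ => 1)
      simp only [one_mul] at h
      rw [h, hwsum]; ring
    have hle := hopt w' hw'01 hw'sum
    rw [hdiff (fun i => |a - Y i|)] at hle
    have h2 : |a - Y k| * (1/N) ≤ |a - Y j| * (1/N) := by linarith
    have hpos : (0:ℝ) < 1/N := by positivity
    exact le_of_mul_le_mul_right h2 hpos
  -- cardinality of the support
  have hcard : S.card = N := by
    have e1 : ∑ j ∈ S, w j = S.card * (1/N) := by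
      rw [Finset.sum_congr rfl (fun j hj => ((hmemS j).1 hj).2), Finset.sum_const,
        nsmul_eq_mul]
    have e2 : ∑ j ∈ (Finset.range (K*N)).filter (fun j => ¬ w j = 1/N), w j = 0 := by
      apply Finset.sum_eq_zero
      intro j hj
      simp only [Finset.mem_filter, Finset.mem_range] at hj
      rcases hw01 j hj.1 with h | h
      · exact h
      · exact absurd h hj.2
    have h1 : (S.card : ℝ) * (1/N) = 1 := by
      rw [← e1, ← hwsum,
        ← Finset.sum_filter_add_sum_filter_not (Finset.range (K*N)) (fun j => w j = 1/N) w,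
        ← hS, e2, add_zero]
    have h2 : (S.card : ℝ) = N := by
      field_simp at h1
      exact_mod_cast h1
    exact_mod_cast h2
  have hne : S.Nonempty := Finset.card_pos.mp (by rw [hcard]; exact hN)
  set ℓ := S.min' hne with hℓdef
  set m := S.max' hne with hmdef
  have hℓS : ℓ ∈ S := S.min'_mem hne
  have hmS : m ∈ S := S.max'_mem hne
  have hℓlt : ℓ < K*N := ((hmemS ℓ).1 hℓS).1
  have hmlt : m < K*N := ((hmemS m).1 hmS).1
  have hℓm : ℓ ≤ m := S.min'_le m hmS
  -- S is an interval
  have hicc : S = Finset.Icc ℓ m := by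
    apply Finset.Subset.antisymm
    · intro x hx
      rw [Finset.mem_Icc]
      exact ⟨S.min'_le x hx, S.le_max' x hx⟩
    · intro x hx
      rw [Finset.mem_Icc] at hx
      by_contra hxS
      have hxlt : x < K*N := lt_of_le_of_lt hx.2 hmlt
      have hℓx : ℓ ≠ x := fun h => hxS (h ▸ hℓS)
      have hmx : x ≠ m := fun h => hxS (h ▸ hmS)
      have hℓltx : ℓ < x := lt_of_le_of_ne hx.1 hℓx
      have hxm : x < m := lt_of_le_of_ne hx.2 hmx
      have hw_x : w x = 0 := hw0 x hxlt hxS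
      have h1 : |a - Y ℓ| ≤ |a - Y x| :=
        key x ℓ hxlt hℓlt (Ne.symm hℓx) hw_x ((hmemS ℓ).1 hℓS).2
      have h2 : |a - Y m| ≤ |a - Y x| :=
        key x m hxlt hmlt hmx hw_x ((hmemS m).1 hmS).2
      have hY1 : Y ℓ < Y x := hY ℓ x hℓltx hxlt
      have hY2 : Y x < Y m := hY x m hxm hmlt
      rcases le_total a (Y x) with hc | hc
      · have e1 : |a - Y x| = Y x - a := by
          rw [abs_sub_comm]; exact abs_of_nonneg (by linarith)
        have e2 : Y m - a ≤ |a - Y m| := by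
          rw [abs_sub_comm]; exact le_abs_self _
        linarith
      · have e1 : |a - Y x| = a - Y x := abs_of_nonneg (by linarith)
        have e2 : a - Y ℓ ≤ |a - Y ℓ| := le_abs_self _
        linarith
  have hcard' : m + 1 - ℓ = N := by
    have := hcard
    rw [hicc, Nat.card_Icc] at this
    exact this
  have hm1 : m + 1 = ℓ + N := by omega
  have hIco : S = Finset.Ico ℓ (ℓ + N) := by
    rw [hicc, ← hm1, Finset.Ico_add_one_right_eq_Icc]
  refine ⟨ℓ, by omega, ?_, ?_⟩
  · intro j hj
    constructor
    · intro hwj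
      have : j ∈ S := (hmemS j).2 ⟨hj, hwj⟩
      rw [hIco, Finset.mem_Ico] at this
      exact this
    · intro hj'
      have : j ∈ S := by rw [hIco, Finset.mem_Ico]; exact hj'
      exact ((hmemS j).1 this).2
  · rw [← Finset.sum_filter_add_sum_filter_not (Finset.range (K*N)) (fun j => w j = 1/N)]
    have e2 : ∑ j ∈ (Finset.range (K*N)).filter (fun j => ¬ w j = 1/N),
        |a - Y j| * w j = 0 := by
      apply Finset.sum_eq_zero
      intro j hj
      simp only [Finset.mem_filter, Finset.mem_range] at hj
      rcases hw01 j hj.1 with h | h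
      · rw [h, mul_zero]
      · exact absurd h hj.2
    have e1 : ∑ j ∈ S, |a - Y j| * w j = (1/N) * ∑ h ∈ Finset.Ico ℓ (ℓ + N), |a - Y h| := by
      rw [Finset.mul_sum, ← hIco]
      apply Finset.sum_congr rfl
      intro j hj
      rw [((hmemS j).1 hj).2, mul_comm]
    rw [← hS, e1, e2, add_zero]
end

section
/- Step-1 potential inequality (case: both facilities left of all agents): suppose x^{t-1}_1 ≤ x^{t-1}_2 ≤ α^t_1 where α^t_1 = min agent position at stage t, and let z_1 = x^{t-1}_1, z_2 = α^t_1. Suppose y^t_1 ≤ y^t_2 and at least one of y^t_1, y^t_2 lies in [α^t_1, α^t_n]. Then, with Φ(u_1,u_2; v_1,v_2) = 2(|u_1 − v_1| + |u_2 − v_2|) + |u_1 − u_2|, the moving cost satisfies |z_2 − x^{t-1}_2| ≤ 2(|y^t_1 − y^{t-1}_1| + |y^t_2 − y^{t-1}_2|) − Φ(z; y^t) + Φ(x^{t-1}; y^{t-1}). -/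
/-- Step-1 potential inequality, case where both facilities are left of all agents:
with z1 = x1, z2 = α1, the moving cost |z2 − x2| is bounded via the potential
Φ(u1,u2;v1,v2) = 2(|u1 − v1| + |u2 − v2|) + |u1 − u2|, evaluated at stage t
(against y) and stage t−1 (against yp). -/
theorem stmt12 (x1 x2 a1 an y1 y2 y1p y2p z1 z2 : ℝ)
    (h12 : x1 ≤ x2) (h2a : x2 ≤ a1) (haa : a1 ≤ an)
    (hz1 : z1 = x1) (hz2 : z2 = a1)
    (hy : y1 ≤ y2)
    (hyin : (a1 ≤ y1 ∧ y1 ≤ an) ∨ (a1 ≤ y2 ∧ y2 ≤ an)) :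
    |z2 - x2| ≤ 2 * (|y1 - y1p| + |y2 - y2p|)
      - (2 * (|z1 - y1| + |z2 - y2|) + |z1 - z2|)
      + (2 * (|x1 - y1p| + |x2 - y2p|) + |x1 - x2|) := by
  rw [hz1, hz2]
  have hy2 : a1 ≤ y2 := hyin.elim (fun h => le_trans h.1 hy) (·.1)
  have e1 : |a1 - x2| = a1 - x2 := abs_of_nonneg (by linarith)
  have e2 : |x1 - a1| = a1 - x1 := by rw [abs_sub_comm]; exact abs_of_nonneg (by linarith)
  have e3 : |x1 - x2| = x2 - x1 := by rw [abs_sub_comm]; exact abs_of_nonneg (by linarith)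
  have e4 : |a1 - y2| = y2 - a1 := by rw [abs_sub_comm]; exact abs_of_nonneg (by linarith)
  have t1 : |x1 - y1| ≤ |x1 - y1p| + |y1 - y1p| := by
    have := abs_sub_le x1 y1p y1
    rwa [abs_sub_comm y1p y1] at this
  have t2 : y2 - x2 ≤ |x2 - y2p| + |y2 - y2p| := by
    have h := abs_sub_le x2 y2p y2
    rw [abs_sub_comm y2p y2] at h
    calc y2 - x2 ≤ |x2 - y2| := by rw [abs_sub_comm]; exact le_abs_self _
    _ ≤ _ := h
  rw [e1, e2, e3, e4]
  linarith
end

section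
/- Step-2 potential inequality (far facility, two optimal clusters): suppose α_1 ≤ z_1 ≤ α_n, z_2 − α_n ≥ 3H(C), x_1 is a median of C (so H(C_{1}) + H(C_{2}) ≤ H(C) for the induced clusters with all agents at facility 1), and x_2 = z_2 − 3H(C). Suppose y_1 ≤ y_2 with y_2 ≤ α_n (both optimal clusters nonempty). Then Φ(x) − Φ(z) ≤ −6H(C) ≤ Σ_{k=1}^2 H(C*_k) − Σ_{k=1}^2 [H(C_k) + |x_k − z_k|], where Φ(u) = 2(|u_1 − y_1| + |u_2 − y_2|) + |u_1 − u_2|. -/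
/-- Step-2 potential inequality (far facility, two nonempty optimal clusters):
with α1 ≤ z1 ≤ αn, z2 − αn ≥ 3H(C), x1 a median of C (so H(C₁)+H(C₂) ≤ H(C) and
|x1 − z1| ≤ H(C)), x2 = z2 − 3H(C), and medians y1 ≤ y2 ≤ αn of the optimal clusters,
the potential drop pays: Φ(x) − Φ(z) ≤ −6H(C) ≤ Σ_k H(C*_k) − Σ_k [H(C_k) + |x_k − z_k|],
where Φ(u1,u2) = 2(|u1 − y1| + |u2 − y2|) + |u1 − u2|. -/
theorem stmt15 (a1 an z1 z2 x1 x2 y1 y2 H H1 H2 Hs1 Hs2 : ℝ)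
    (hz1 : a1 ≤ z1) (hz1' : z1 ≤ an) (hz2 : 3 * H ≤ z2 - an)
    (hx2 : x2 = z2 - 3 * H)
    (hH : 0 ≤ H) (hH1 : 0 ≤ H1) (hH2 : 0 ≤ H2) (hH12 : H1 + H2 ≤ H)
    (hx1 : |x1 - z1| ≤ H)
    (hy : y1 ≤ y2) (hy2 : y2 ≤ an)
    (hHs1 : 0 ≤ Hs1) (hHs2 : 0 ≤ Hs2) :
    (2 * (|x1 - y1| + |x2 - y2|) + |x1 - x2|)
        - (2 * (|z1 - y1| + |z2 - y2|) + |z1 - z2|) ≤ -(6 * H)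
    ∧ -(6 * H) ≤ (Hs1 + Hs2) - ((H1 + |x1 - z1|) + (H2 + |x2 - z2|)) := by
  have hx2an : an ≤ x2 := by linarith
  have h6 : |x2 - z2| = 3 * H := by
    rw [hx2]; rw [show z2 - 3 * H - z2 = -(3 * H) by ring, abs_neg, abs_of_nonneg]; linarith
  have h2 : |x2 - y2| = x2 - y2 := abs_of_nonneg (by linarith)
  have h3 : |z2 - y2| = z2 - y2 := abs_of_nonneg (by linarith)
  have h5 : |z1 - z2| = z2 - z1 := by
    rw [abs_sub_comm]; exact abs_of_nonneg (by linarith)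
  have h1 : |x1 - y1| - |z1 - y1| ≤ |x1 - z1| := by
    simpa using abs_sub_abs_le_abs_sub (x1 - y1) (z1 - y1)
  have h4 : |x1 - x2| ≤ |x1 - z1| + (x2 - z1) := by
    calc |x1 - x2| ≤ |x1 - z1| + |z1 - x2| := abs_sub_le _ _ _
    _ = |x1 - z1| + (x2 - z1) := by
        rw [abs_sub_comm z1 x2, abs_of_nonneg (by linarith : (0:ℝ) ≤ x2 - z1)]
  constructor
  · linarith
  · linarith
end

section
/- Lower bound transfer: any c-competitive online algorithm for the 2-facility reallocation problem on the line yields a c-competitive online algorithm for the 2-server problem on the line; in particular, since the 2-server problem on the line has competitive ratio at least 2, no online algorithm for 2-facility reallocation on the line is c-competitive for c < 2. -/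
noncomputable section

/-- Connection cost of a multiset of agent positions to a pair of facilities. -/
def connCost (Cm : Multiset ℝ) (p : ℝ × ℝ) : ℝ :=
  (Cm.map fun a => min |a - p.1| |a - p.2|).sum

/-- Moving cost between two pairs of facility positions. -/
def moveCost (p q : ℝ × ℝ) : ℝ := |q.1 - p.1| + |q.2 - p.2|

/-- Facility positions realized by an online 2-facility reallocation algorithm
`Alg x0 t σ` (position pair chosen at stage t on request sequence σ, from initial
positions x0). -/
def algPos (Alg : ℝ × ℝ → ℕ → (ℕ → Multiset ℝ) → ℝ × ℝ) (x0 : ℝ × ℝ)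
    (σ : ℕ → Multiset ℝ) : ℕ → ℝ × ℝ
  | 0 => x0
  | t + 1 => Alg x0 (t + 1) σ

/-- Total cost (moving plus connection) of the online algorithm over stages 1..T. -/
def algCost (Alg : ℝ × ℝ → ℕ → (ℕ → Multiset ℝ) → ℝ × ℝ) (x0 : ℝ × ℝ)
    (σ : ℕ → Multiset ℝ) (T : ℕ) : ℝ :=
  ∑ t ∈ Finset.Icc 1 T,
    (moveCost (algPos Alg x0 σ (t - 1)) (algPos Alg x0 σ t) +
      connCost (σ t) (algPos Alg x0 σ t))

/-- Cost of an offline solution `q` (with `q 0 = x0`) over stages 1..T. -/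
def offCost (σ : ℕ → Multiset ℝ) (q : ℕ → ℝ × ℝ) (T : ℕ) : ℝ :=
  ∑ t ∈ Finset.Icc 1 T, (moveCost (q (t - 1)) (q t) + connCost (σ t) (q t))

/-- Optimal offline cost of a 2-facility reallocation instance. -/
def optCost (x0 : ℝ × ℝ) (σ : ℕ → Multiset ℝ) (T : ℕ) : ℝ :=
  sInf {c : ℝ | ∃ q : ℕ → ℝ × ℝ, q 0 = x0 ∧ c = offCost σ q T}

/-- Online property: the decision at stage t depends only on the requests up to stage t. -/
def OnlineRealloc (Alg : ℝ × ℝ → ℕ → (ℕ → Multiset ℝ) → ℝ × ℝ) : Prop :=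
  ∀ x0 t σ σ', (∀ s ≤ t, σ s = σ' s) → Alg x0 t σ = Alg x0 t σ'

/-- c-competitiveness of an online 2-facility reallocation algorithm, with an additive
constant that may depend on the initial facility positions but not on the requests. -/
def ReallocCompetitive (c : ℝ) (Alg : ℝ × ℝ → ℕ → (ℕ → Multiset ℝ) → ℝ × ℝ) : Prop :=
  OnlineRealloc Alg ∧ ∃ A : ℝ × ℝ → ℝ, ∀ x0 σ T,
    algCost Alg x0 σ T ≤ c * optCost x0 σ T + A x0

/-- Server positions realized by an online 2-server algorithm. -/
def srvPos (B : ℝ × ℝ → ℕ → (ℕ → ℝ) → ℝ × ℝ) (x0 : ℝ × ℝ) (r : ℕ → ℝ) : ℕ → ℝ × ℝ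
  | 0 => x0
  | t + 1 => B x0 (t + 1) r

/-- Total moving cost of an online 2-server algorithm over stages 1..T. -/
def srvAlgCost (B : ℝ × ℝ → ℕ → (ℕ → ℝ) → ℝ × ℝ) (x0 : ℝ × ℝ) (r : ℕ → ℝ) (T : ℕ) : ℝ :=
  ∑ t ∈ Finset.Icc 1 T, moveCost (srvPos B x0 r (t - 1)) (srvPos B x0 r t)

/-- Optimal offline 2-server cost: cheapest movement schedule serving every request. -/
def srvOptCost (x0 : ℝ × ℝ) (r : ℕ → ℝ) (T : ℕ) : ℝ :=
  sInf {c : ℝ | ∃ q : ℕ → ℝ × ℝ, q 0 = x0 ∧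
    (∀ t ∈ Finset.Icc 1 T, (q t).1 = r t ∨ (q t).2 = r t) ∧
    c = ∑ t ∈ Finset.Icc 1 T, moveCost (q (t - 1)) (q t)}

/-- c-competitiveness of an online 2-server algorithm on the line. -/
def ServerCompetitive (c : ℝ) (B : ℝ × ℝ → ℕ → (ℕ → ℝ) → ℝ × ℝ) : Prop :=
  (∀ x0 t r r', (∀ s ≤ t, r s = r' s) → B x0 t r = B x0 t r') ∧
  (∀ x0 t r, 1 ≤ t → (B x0 t r).1 = r t ∨ (B x0 t r).2 = r t) ∧
  ∃ A : ℝ × ℝ → ℝ, ∀ x0 r T, srvAlgCost B x0 r T ≤ c * srvOptCost x0 r T + A x0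

namespace S19

open Finset

/-! ### generic -/

lemma moveCost_nonneg (p q : ℝ × ℝ) : 0 ≤ moveCost p q :=
  add_nonneg (abs_nonneg _) (abs_nonneg _)

lemma moveCost_comm (p q : ℝ × ℝ) : moveCost p q = moveCost q p := by
  simp [moveCost, abs_sub_comm]

lemma moveCost_triangle (a b c : ℝ × ℝ) :
    moveCost a c ≤ moveCost a b + moveCost b c := by
  have h1 : |c.1 - a.1| ≤ |c.1 - b.1| + |b.1 - a.1| := abs_sub_le _ _ _
  have h2 : |c.2 - a.2| ≤ |c.2 - b.2| + |b.2 - a.2| := abs_sub_le _ _ _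
  simp only [moveCost]; linarith

lemma connCost_nonneg (Cm : Multiset ℝ) (p : ℝ × ℝ) : 0 ≤ connCost Cm p := by
  apply Multiset.sum_nonneg
  intro x hx
  obtain ⟨a, _, rfl⟩ := Multiset.mem_map.mp hx
  exact le_min (abs_nonneg _) (abs_nonneg _)

lemma connCost_replicate (K : ℕ) (u : ℝ) (p : ℝ × ℝ) :
    connCost (Multiset.replicate K u) p = K * min |u - p.1| |u - p.2| := by
  simp [connCost, Multiset.map_replicate, Multiset.sum_replicate, nsmul_eq_mul]

/-! ### clip -/

def clipR (x : ℝ) : ℝ := max 0 (min 4 x)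

def clip2 (p : ℝ × ℝ) : ℝ × ℝ := (clipR p.1, clipR p.2)

lemma clipR_lipschitz (a b : ℝ) : |clipR a - clipR b| ≤ |a - b| := by
  have key : ∀ x y : ℝ, |min 4 x - min 4 y| ≤ |x - y| := by
    intro x y
    rcases min_cases (4:ℝ) x with ⟨e1, h1⟩ | ⟨e1, h1⟩ <;>
      rcases min_cases (4:ℝ) y with ⟨e2, h2⟩ | ⟨e2, h2⟩ <;> rw [e1, e2] <;>
      · rw [abs_le]
        constructor <;>
          [ (nlinarith [neg_abs_le (x - y), le_abs_self (x - y), abs_nonneg (x-y)]);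
            (nlinarith [neg_abs_le (x - y), le_abs_self (x - y), abs_nonneg (x-y)]) ]
  have key2 : ∀ x y : ℝ, |max 0 x - max 0 y| ≤ |x - y| := by
    intro x y
    rcases max_cases (0:ℝ) x with ⟨e1, h1⟩ | ⟨e1, h1⟩ <;>
      rcases max_cases (0:ℝ) y with ⟨e2, h2⟩ | ⟨e2, h2⟩ <;> rw [e1, e2] <;>
      · rw [abs_le]
        constructor <;>
          [ (nlinarith [neg_abs_le (x - y), le_abs_self (x - y), abs_nonneg (x-y)]);
            (nlinarith [neg_abs_le (x - y), le_abs_self (x - y), abs_nonneg (x-y)]) ]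
  calc |clipR a - clipR b| ≤ |min 4 a - min 4 b| := key2 _ _
    _ ≤ |a - b| := key _ _

lemma clipR_fix {u : ℝ} (h0 : 0 ≤ u) (h4 : u ≤ 4) : clipR u = u := by
  unfold clipR; rw [min_eq_right h4, max_eq_right h0]

lemma clipR_dist {u : ℝ} (h0 : 0 ≤ u) (h4 : u ≤ 4) (a : ℝ) :
    |clipR a - u| ≤ |a - u| := by
  conv_lhs => rw [show u = clipR u from (clipR_fix h0 h4).symm]
  exact clipR_lipschitz a u

lemma moveCost_clip2 (p q : ℝ × ℝ) : moveCost (clip2 p) (clip2 q) ≤ moveCost p q :=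
  add_le_add (clipR_lipschitz _ _) (clipR_lipschitz _ _)

/-! ### dm -/

def dm (y z : ℝ × ℝ) : ℝ :=
  min (|y.1 - z.1| + |y.2 - z.2|) (|y.1 - z.2| + |y.2 - z.1|)

lemma dm_nonneg (y z : ℝ × ℝ) : 0 ≤ dm y z :=
  le_min (add_nonneg (abs_nonneg _) (abs_nonneg _)) (add_nonneg (abs_nonneg _) (abs_nonneg _))

lemma dm_lipschitz (y y' z : ℝ × ℝ) : dm y' z ≤ moveCost y y' + dm y z := by
  unfold dm moveCost
  rcases le_total (|y.1 - z.1| + |y.2 - z.2|) (|y.1 - z.2| + |y.2 - z.1|) with h | h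
  · rw [min_eq_left h]
    have h1 : |y'.1 - z.1| ≤ |y'.1 - y.1| + |y.1 - z.1| := abs_sub_le _ _ _
    have h2 : |y'.2 - z.2| ≤ |y'.2 - y.2| + |y.2 - z.2| := abs_sub_le _ _ _
    have h3 := min_le_left (|y'.1 - z.1| + |y'.2 - z.2|) (|y'.1 - z.2| + |y'.2 - z.1|)
    linarith
  · rw [min_eq_right h]
    have h1 : |y'.1 - z.2| ≤ |y'.1 - y.1| + |y.1 - z.2| := abs_sub_le _ _ _
    have h2 : |y'.2 - z.1| ≤ |y'.2 - y.2| + |y.2 - z.1| := abs_sub_le _ _ _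
    have h3 := min_le_right (|y'.1 - z.1| + |y'.2 - z.2|) (|y'.1 - z.2| + |y'.2 - z.1|)
    linarith

lemma sim_core (y1 y2 z1 z2 u : ℝ) :
    min (|z1 - u| + min (|y1 - u| + |y2 - z2|) (|y1 - z2| + |y2 - u|))
        (|z2 - u| + min (|y1 - z1| + |y2 - u|) (|y1 - u| + |y2 - z1|))
      ≤ 2 * min |y1 - u| |y2 - u|
        + min (|y1 - z1| + |y2 - z2|) (|y1 - z2| + |y2 - z1|) := by
  rcases le_total |y1 - u| |y2 - u| with hf | hf <;>
    rcases le_total (|y1 - z1| + |y2 - z2|) (|y1 - z2| + |y2 - z1|) with hD | hD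
  · -- f = y1, straight matching : move z1
    rw [min_eq_left hf, min_eq_left hD]
    have t1 := min_le_left (|z1 - u| + min (|y1 - u| + |y2 - z2|) (|y1 - z2| + |y2 - u|))
      (|z2 - u| + min (|y1 - z1| + |y2 - u|) (|y1 - u| + |y2 - z1|))
    have t2 := min_le_left (|y1 - u| + |y2 - z2|) (|y1 - z2| + |y2 - u|)
    have t3 : |z1 - u| ≤ |z1 - y1| + |y1 - u| := abs_sub_le _ _ _
    have t4 : |z1 - y1| = |y1 - z1| := abs_sub_comm _ _
    linarith
  · -- f = y1, cross matching : move z2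
    rw [min_eq_left hf, min_eq_right hD]
    have t1 := min_le_right (|z1 - u| + min (|y1 - u| + |y2 - z2|) (|y1 - z2| + |y2 - u|))
      (|z2 - u| + min (|y1 - z1| + |y2 - u|) (|y1 - u| + |y2 - z1|))
    have t2 := min_le_right (|y1 - z1| + |y2 - u|) (|y1 - u| + |y2 - z1|)
    have t3 : |z2 - u| ≤ |z2 - y1| + |y1 - u| := abs_sub_le _ _ _
    have t4 : |z2 - y1| = |y1 - z2| := abs_sub_comm _ _
    linarith
  · -- f = y2, straight matching : move z2
    rw [min_eq_right hf, min_eq_left hD]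
    have t1 := min_le_right (|z1 - u| + min (|y1 - u| + |y2 - z2|) (|y1 - z2| + |y2 - u|))
      (|z2 - u| + min (|y1 - z1| + |y2 - u|) (|y1 - u| + |y2 - z1|))
    have t2 := min_le_left (|y1 - z1| + |y2 - u|) (|y1 - u| + |y2 - z1|)
    have t3 : |z2 - u| ≤ |z2 - y2| + |y2 - u| := abs_sub_le _ _ _
    have t4 : |z2 - y2| = |y2 - z2| := abs_sub_comm _ _
    linarith
  · -- f = y2, cross matching : move z1
    rw [min_eq_right hf, min_eq_right hD]
    have t1 := min_le_left (|z1 - u| + min (|y1 - u| + |y2 - z2|) (|y1 - z2| + |y2 - u|))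
      (|z2 - u| + min (|y1 - z1| + |y2 - u|) (|y1 - u| + |y2 - z1|))
    have t2 := min_le_right (|y1 - u| + |y2 - z2|) (|y1 - z2| + |y2 - u|)
    have t3 : |z1 - u| ≤ |z1 - y2| + |y2 - u| := abs_sub_le _ _ _
    have t4 : |z1 - y2| = |y2 - z1| := abs_sub_comm _ _
    linarith

/-! ### three points -/

def P3 (v : ℝ) : Prop := v = 0 ∨ v = 2 ∨ v = 4

def phiW (w : ℝ) : ℝ := if w = 2 then 2 else 0

lemma phiW_nonneg (w : ℝ) : 0 ≤ phiW w := by unfold phiW; split <;> norm_num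

lemma third_lemma {a b : ℝ} (ha : P3 a) (hb : P3 b) (hab : a ≠ b) :
    P3 (6 - a - b) ∧ (6 - a - b) ≠ a ∧ (6 - a - b) ≠ b := by
  rcases ha with rfl | rfl | rfl <;> rcases hb with rfl | rfl | rfl <;>
    revert hab <;> norm_num [P3]

lemma p3_dist {v w : ℝ} (hv : P3 v) (hw : P3 w) (hne : v ≠ w) : 2 ≤ |v - w| := by
  rcases hv with rfl | rfl | rfl <;> rcases hw with rfl | rfl | rfl <;>
    revert hne <;> norm_num

lemma p3_range {v : ℝ} (hv : P3 v) : 0 ≤ v ∧ v ≤ 4 := by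
  rcases hv with rfl | rfl | rfl <;> norm_num

lemma lazy_step {a b rt : ℝ} (ha : P3 a) (hb : P3 b) (hab : a ≠ b)
    (hrt : rt = a ∨ rt = b) :
    |(6 - a - b) - rt| + phiW b - phiW (a + b - rt) ≤ |(6 - a - b) - a| ∧
    |(6 - a - b) - rt| + phiW a - phiW (a + b - rt) ≤ |(6 - a - b) - b| := by
  rcases ha with rfl | rfl | rfl <;> rcases hb with rfl | rfl | rfl <;>
    rcases hrt with rfl | rfl <;> revert hab <;> norm_num [phiW]

lemma p3_forcing {rt w1 w2 rt1 : ℝ} (hrt : P3 rt) (h1 : P3 w1) (h2 : P3 w2)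
    (h3 : P3 rt1) (h12 : w1 ≠ w2) (h1r : w1 ≠ rt) (h2r : w2 ≠ rt) (hne : rt1 ≠ rt) :
    rt1 = w1 ∨ rt1 = w2 := by
  rcases hrt with rfl | rfl | rfl <;> rcases h1 with rfl | rfl | rfl <;>
    rcases h2 with rfl | rfl | rfl <;> rcases h3 with rfl | rfl | rfl <;> norm_num at *


/-! ### the adversary construction -/

def x0std : ℝ × ℝ := (0, 2)

variable (Alg : ℝ × ℝ → ℕ → (ℕ → Multiset ℝ) → ℝ × ℝ)

def respond (z : ℝ × ℝ) (u : ℝ) (y : ℝ × ℝ) : ℝ × ℝ :=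
  if |z.1 - u| + dm y (u, z.2) ≤ |z.2 - u| + dm y (z.1, u) then (u, z.2) else (z.1, u)

def H : ℕ → (ℕ → ℝ) × (ℝ × ℝ)
  | 0 => (fun _ => 0, (0, 2))
  | t + 1 =>
      ((fun s => if s = t + 1 then 6 - (H t).2.1 - (H t).2.2 else (H t).1 s),
       respond (H t).2 (6 - (H t).2.1 - (H t).2.2)
         (clip2 (algPos Alg x0std
           (fun s => Multiset.replicate 4
             (if s = t + 1 then 6 - (H t).2.1 - (H t).2.2 else (H t).1 s)) (t + 1))))

def advR (t : ℕ) : ℝ := (H Alg t).1 t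
def advZ (t : ℕ) : ℝ × ℝ := (H Alg t).2
def advσ : ℕ → Multiset ℝ := fun s => Multiset.replicate 4 (advR Alg s)
def advY (t : ℕ) : ℝ × ℝ := clip2 (algPos Alg x0std (advσ Alg) t)

lemma advR_zero : advR Alg 0 = 0 := rfl
lemma advZ_zero : advZ Alg 0 = (0, 2) := rfl

lemma advR_succ (t : ℕ) : advR Alg (t + 1) = 6 - (advZ Alg t).1 - (advZ Alg t).2 := by
  rw [show advR Alg (t+1)
      = if t + 1 = t + 1 then 6 - (advZ Alg t).1 - (advZ Alg t).2 else (H Alg t).1 (t+1)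
      from rfl, if_pos rfl]

lemma H_fst (t s : ℕ) (hs : s ≤ t) : (H Alg t).1 s = advR Alg s := by
  induction t with
  | zero => interval_cases s; rfl
  | succ t ih =>
      by_cases h : s = t + 1
      · subst h; rfl
      · have hs' : s ≤ t := by omega
        show (H Alg (t+1)).1 s = _
        rw [show (H Alg (t+1)).1 s = if s = t + 1 then _ else (H Alg t).1 s from rfl,
          if_neg h]
        exact ih hs'

lemma advZ_succ (hOn : OnlineRealloc Alg) (t : ℕ) :
    advZ Alg (t + 1) = respond (advZ Alg t) (advR Alg (t + 1)) (advY Alg (t + 1)) := by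
  have hz : advZ Alg (t + 1)
      = respond (advZ Alg t) (6 - (advZ Alg t).1 - (advZ Alg t).2)
        (clip2 (algPos Alg x0std
          (fun s => Multiset.replicate 4
            (if s = t + 1 then 6 - (advZ Alg t).1 - (advZ Alg t).2 else (H Alg t).1 s))
          (t + 1))) := rfl
  have hagree : ∀ s ≤ t + 1,
      (fun s => Multiset.replicate 4
        (if s = t + 1 then 6 - (advZ Alg t).1 - (advZ Alg t).2 else (H Alg t).1 s)) s
      = advσ Alg s := by
    intro s hs
    by_cases h : s = t + 1
    · subst h
      show Multiset.replicate 4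
          (if t + 1 = t + 1 then 6 - (advZ Alg t).1 - (advZ Alg t).2 else (H Alg t).1 (t+1))
        = advσ Alg (t+1)
      rw [if_pos rfl]
      simp only [advσ, advR_succ]
    · have : s ≤ t := by omega
      simp only [if_neg h, advσ, H_fst Alg t s this]
  have halg : algPos Alg x0std
      (fun s => Multiset.replicate 4
        (if s = t + 1 then 6 - (advZ Alg t).1 - (advZ Alg t).2 else (H Alg t).1 s))
      (t + 1) = algPos Alg x0std (advσ Alg) (t + 1) := by
    show Alg x0std (t+1) _ = Alg x0std (t+1) _
    exact hOn _ _ _ _ hagree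
  rw [hz, halg, advR_succ]
  rfl

def ZInv (z : ℝ × ℝ) (rt : ℝ) : Prop :=
  P3 z.1 ∧ P3 z.2 ∧ z.1 ≠ z.2 ∧ (rt = z.1 ∨ rt = z.2)

lemma respond_cases (z : ℝ × ℝ) (u : ℝ) (y : ℝ × ℝ) :
    respond z u y = (u, z.2) ∨ respond z u y = (z.1, u) := by
  unfold respond; split <;> [left; right] <;> rfl

lemma advZ_invariant (t : ℕ) : ZInv (advZ Alg t) (advR Alg t) := by
  induction t with
  | zero =>
      refine ⟨Or.inl rfl, Or.inr (Or.inl rfl), ?_, Or.inl rfl⟩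
      rw [advZ_zero]; norm_num
  | succ t ih =>
      obtain ⟨h1, h2, h3, _⟩ := ih
      obtain ⟨hu, hua, hub⟩ := third_lemma h1 h2 h3
      have hr := advR_succ Alg t
      have hz : advZ Alg (t+1) = respond (advZ Alg t) (6 - (advZ Alg t).1 - (advZ Alg t).2)
          (clip2 (algPos Alg x0std
            (fun s => Multiset.replicate 4
              (if s = t + 1 then 6 - (advZ Alg t).1 - (advZ Alg t).2 else (H Alg t).1 s))
            (t + 1))) := rfl
      rcases respond_cases (advZ Alg t) (6 - (advZ Alg t).1 - (advZ Alg t).2)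
          (clip2 (algPos Alg x0std
            (fun s => Multiset.replicate 4
              (if s = t + 1 then 6 - (advZ Alg t).1 - (advZ Alg t).2 else (H Alg t).1 s))
            (t + 1))) with h | h <;> rw [h] at hz
      · exact ⟨by rw [hz]; exact hu, by rw [hz]; exact h2,
          by rw [hz]; exact hub, Or.inl (by rw [hz, hr])⟩
      · exact ⟨by rw [hz]; exact h1, by rw [hz]; exact hu,
          by rw [hz]; exact fun hh => hua hh.symm, Or.inr (by rw [hz, hr])⟩

lemma advR_P3 (t : ℕ) : P3 (advR Alg t) := by
  obtain ⟨h1, h2, _, hr⟩ := advZ_invariant Alg t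
  rcases hr with h | h <;> rw [h] <;> assumption

lemma advR_ne (t : ℕ) : advR Alg (t + 1) ≠ advR Alg t := by
  obtain ⟨h1, h2, h3, hr⟩ := advZ_invariant Alg t
  obtain ⟨_, hua, hub⟩ := third_lemma h1 h2 h3
  rw [advR_succ]
  rcases hr with h | h <;> rw [h] <;> assumption

/-! ### potentials -/

def Phi (t : ℕ) : ℝ := phiW ((advZ Alg t).1 + (advZ Alg t).2 - advR Alg t)
def Psi (t : ℕ) : ℝ := dm (advY Alg t) (advZ Alg t)
def epsA (t : ℕ) : ℝ := min |(advY Alg t).1 - advR Alg t| |(advY Alg t).2 - advR Alg t|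

lemma epsA_nonneg (t : ℕ) : 0 ≤ epsA Alg t := le_min (abs_nonneg _) (abs_nonneg _)

lemma Phi_zero : Phi Alg 0 = 2 := by
  unfold Phi; rw [advZ_zero, advR_zero]; norm_num [phiW]

lemma advY_zero : advY Alg 0 = (0, 2) := by
  unfold advY
  show clip2 x0std = (0, 2)
  unfold clip2 x0std clipR
  norm_num

lemma Psi_zero : Psi Alg 0 = 0 := by
  unfold Psi dm; rw [advY_zero, advZ_zero]; norm_num

/-- lazy step in context -/
lemma lazy_step_ctx (hOn : OnlineRealloc Alg) (t : ℕ) :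
    |advR Alg (t+1) - advR Alg t| + Phi Alg (t+1) - Phi Alg t
      ≤ moveCost (advZ Alg t) (advZ Alg (t+1)) := by
  obtain ⟨h1, h2, h3, hr⟩ := advZ_invariant Alg t
  have hz := advZ_succ Alg hOn t
  have hu : advR Alg (t+1) = 6 - (advZ Alg t).1 - (advZ Alg t).2 := advR_succ Alg t
  have hstep := lazy_step h1 h2 h3 hr
  rcases respond_cases (advZ Alg t) (advR Alg (t+1)) (advY Alg (t+1)) with h | h <;>
    rw [h] at hz
  · have hmc : moveCost (advZ Alg t) (advZ Alg (t+1))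
        = |6 - (advZ Alg t).1 - (advZ Alg t).2 - (advZ Alg t).1| := by
      rw [hz, hu]; simp [moveCost]
    have harg : advR Alg (t+1) + (advZ Alg t).2 - advR Alg (t+1) = (advZ Alg t).2 := by ring
    have hPhi : Phi Alg (t+1) = phiW ((advZ Alg t).2) := by
      rw [Phi, hz]; simp only; rw [harg]
    rw [hmc, hPhi, hu, Phi]
    exact hstep.1
  · have hmc : moveCost (advZ Alg t) (advZ Alg (t+1))
        = |6 - (advZ Alg t).1 - (advZ Alg t).2 - (advZ Alg t).2| := by
      rw [hz, hu]; simp [moveCost]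
    have harg : (advZ Alg t).1 + advR Alg (t+1) - advR Alg (t+1) = (advZ Alg t).1 := by ring
    have hPhi : Phi Alg (t+1) = phiW ((advZ Alg t).1) := by
      rw [Phi, hz]; simp only; rw [harg]
    rw [hmc, hPhi, hu, Phi]
    exact hstep.2

/-- simulation step in context -/
lemma sim_step_ctx (hOn : OnlineRealloc Alg) (t : ℕ) :
    moveCost (advZ Alg t) (advZ Alg (t+1)) + Psi Alg (t+1)
      ≤ moveCost (advY Alg t) (advY Alg (t+1)) + 2 * epsA Alg (t+1) + Psi Alg t := by
  have hz := advZ_succ Alg hOn t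
  set z := advZ Alg t with hzdef
  set y := advY Alg (t+1) with hydef
  set u := advR Alg (t+1) with hudef
  have key : moveCost z (advZ Alg (t+1)) + Psi Alg (t+1)
      ≤ min (|z.1 - u| + dm y (u, z.2)) (|z.2 - u| + dm y (z.1, u)) := by
    rw [show Psi Alg (t+1) = dm y (advZ Alg (t+1)) from rfl, hz]
    unfold respond
    split
    · rename_i hcond
      rw [min_eq_left hcond]
      have hmc : moveCost z (u, z.2) = |u - z.1| := by simp [moveCost]
      rw [hmc, abs_sub_comm u z.1]
    · rename_i hcond
      push_neg at hcond
      rw [min_eq_right hcond.le]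
      have hmc : moveCost z (z.1, u) = |u - z.2| := by simp [moveCost]
      rw [hmc, abs_sub_comm u z.2]
  have core := sim_core y.1 y.2 z.1 z.2 u
  have hdm1 : dm y (u, z.2)
      = min (|y.1 - u| + |y.2 - z.2|) (|y.1 - z.2| + |y.2 - u|) := rfl
  have hdm2 : dm y (z.1, u)
      = min (|y.1 - z.1| + |y.2 - u|) (|y.1 - u| + |y.2 - z.1|) := rfl
  have hlip : dm y z ≤ moveCost (advY Alg t) y + dm (advY Alg t) z :=
    dm_lipschitz (advY Alg t) y z
  have heps : epsA Alg (t+1) = min |y.1 - u| |y.2 - u| := rfl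
  have hPsi : Psi Alg t = dm (advY Alg t) z := rfl
  have hdmz : dm y z = min (|y.1 - z.1| + |y.2 - z.2|) (|y.1 - z.2| + |y.2 - z.1|) := rfl
  rw [hdm1, hdm2] at key
  rw [← hdmz] at core
  rw [heps, hPsi]
  linarith

/-- per-step online cost lower bound -/
lemma cost_step_ctx (t : ℕ) :
    moveCost (advY Alg t) (advY Alg (t+1)) + 2 * epsA Alg (t+1)
      ≤ moveCost (algPos Alg x0std (advσ Alg) t) (algPos Alg x0std (advσ Alg) (t+1))
        + connCost (advσ Alg (t+1)) (algPos Alg x0std (advσ Alg) (t+1)) := by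
  have h1 : moveCost (advY Alg t) (advY Alg (t+1))
      ≤ moveCost (algPos Alg x0std (advσ Alg) t) (algPos Alg x0std (advσ Alg) (t+1)) :=
    moveCost_clip2 _ _
  have hr := p3_range (advR_P3 Alg (t+1))
  set x := algPos Alg x0std (advσ Alg) (t+1)
  have h2 : connCost (advσ Alg (t+1)) x
      = 4 * min |advR Alg (t+1) - x.1| |advR Alg (t+1) - x.2| :=
    connCost_replicate 4 _ x
  have h3 : epsA Alg (t+1) ≤ min |advR Alg (t+1) - x.1| |advR Alg (t+1) - x.2| := by
    have c1 : |(advY Alg (t+1)).1 - advR Alg (t+1)| ≤ |x.1 - advR Alg (t+1)| :=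
      clipR_dist hr.1 hr.2 x.1
    have c2 : |(advY Alg (t+1)).2 - advR Alg (t+1)| ≤ |x.2 - advR Alg (t+1)| :=
      clipR_dist hr.1 hr.2 x.2
    rw [abs_sub_comm x.1, abs_sub_comm x.2] at *
    exact min_le_min c1 c2
  have h4 : 0 ≤ min |advR Alg (t+1) - x.1| |advR Alg (t+1) - x.2| :=
    le_min (abs_nonneg _) (abs_nonneg _)
  have := epsA_nonneg Alg (t+1)
  nlinarith [h3, h4]

/-- summed online lower bound -/
lemma algCost_succ (x0 : ℝ × ℝ) (σ : ℕ → Multiset ℝ) (T : ℕ) :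
    algCost Alg x0 σ (T+1) = algCost Alg x0 σ T
      + (moveCost (algPos Alg x0 σ T) (algPos Alg x0 σ (T+1))
         + connCost (σ (T+1)) (algPos Alg x0 σ (T+1))) := by
  unfold algCost
  rw [Finset.sum_Icc_succ_top (by omega : 1 ≤ T + 1)]
  simp

lemma online_lb (hOn : OnlineRealloc Alg) (T : ℕ) :
    (∑ t ∈ Finset.Icc 1 T, |advR Alg t - advR Alg (t-1)|)
      + (Phi Alg T - Phi Alg 0) + (Psi Alg T - Psi Alg 0)
    ≤ algCost Alg x0std (advσ Alg) T := by
  induction T with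
  | zero => simp [algCost]
  | succ T ih =>
      rw [algCost_succ, Finset.sum_Icc_succ_top (by omega : 1 ≤ T + 1)]
      have e1 := lazy_step_ctx Alg hOn T
      have e2 := sim_step_ctx Alg hOn T
      have e3 := cost_step_ctx Alg T
      have : (T + 1 : ℕ) - 1 = T := by omega
      rw [this]
      linarith

/-! ### offline algorithms -/

open Classical in
def Bstep (rt rt1 : ℝ) (B : ℝ × ℝ) : ℝ × ℝ :=
  if B.1 = rt1 ∨ B.2 = rt1 then B else if B.1 = rt then (rt1, B.2) else (B.1, rt1)

def good (B : ℝ × ℝ) (rt w : ℝ) : Prop := B = (rt, w) ∨ B = (w, rt)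

lemma Bstep_hit {B : ℝ × ℝ} {rt rt1 : ℝ} (hg : good B rt rt1) :
    Bstep rt rt1 B = B ∧ good B rt1 rt := by
  rcases hg with rfl | rfl
  · exact ⟨by unfold Bstep; rw [if_pos (Or.inr rfl)], Or.inr rfl⟩
  · exact ⟨by unfold Bstep; rw [if_pos (Or.inl rfl)], Or.inl rfl⟩

lemma Bstep_miss {B : ℝ × ℝ} {rt w rt1 : ℝ} (hg : good B rt w) (hw : w ≠ rt1)
    (hne : rt ≠ rt1) (hwrt : w ≠ rt) :
    good (Bstep rt rt1 B) rt1 w ∧ moveCost B (Bstep rt rt1 B) = |rt1 - rt| := by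
  rcases hg with rfl | rfl
  · have h1 : Bstep rt rt1 (rt, w) = (rt1, w) := by
      unfold Bstep
      rw [if_neg (by simp [hne, hw]), if_pos rfl]
    rw [h1]
    exact ⟨Or.inl rfl, by simp [moveCost]⟩
  · have h1 : Bstep rt rt1 (w, rt) = (w, rt1) := by
      unfold Bstep
      rw [if_neg (by simp [hne, hw]), if_neg (by simpa using hwrt)]
    rw [h1]
    exact ⟨Or.inr rfl, by simp [moveCost]⟩

def B1 : ℕ → ℝ × ℝ
  | 0 => (0, 2)
  | 1 => (0, 4)
  | (t+2) => Bstep (advR Alg (t+1)) (advR Alg (t+2)) (B1 (t+1))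

def B2 : ℕ → ℝ × ℝ
  | 0 => (0, 2)
  | 1 => (4, 2)
  | (t+2) => Bstep (advR Alg (t+1)) (advR Alg (t+2)) (B2 (t+1))

lemma B1_succ {T : ℕ} (hT : 1 ≤ T) :
    B1 Alg (T+1) = Bstep (advR Alg T) (advR Alg (T+1)) (B1 Alg T) := by
  obtain ⟨s, rfl⟩ : ∃ s, T = s + 1 := ⟨T - 1, by omega⟩
  rfl

lemma B2_succ {T : ℕ} (hT : 1 ≤ T) :
    B2 Alg (T+1) = Bstep (advR Alg T) (advR Alg (T+1)) (B2 Alg T) := by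
  obtain ⟨s, rfl⟩ : ∃ s, T = s + 1 := ⟨T - 1, by omega⟩
  rfl

lemma advR_one : advR Alg 1 = 4 := by
  rw [advR_succ, advZ_zero]; norm_num

def InvB (t : ℕ) : Prop :=
  ∃ w1 w2, P3 w1 ∧ P3 w2 ∧ w1 ≠ w2 ∧ w1 ≠ advR Alg t ∧ w2 ≠ advR Alg t ∧
    good (B1 Alg t) (advR Alg t) w1 ∧ good (B2 Alg t) (advR Alg t) w2

lemma invB_one : InvB Alg 1 := by
  refine ⟨0, 2, Or.inl rfl, Or.inr (Or.inl rfl), by norm_num, ?_, ?_, ?_, ?_⟩ <;>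
    rw [advR_one]
  · norm_num
  · norm_num
  · exact Or.inr rfl
  · exact Or.inl rfl

lemma invB_succ {T : ℕ} (hT : 1 ≤ T) (h : InvB Alg T) : InvB Alg (T+1) := by
  obtain ⟨w1, w2, hw1, hw2, h12, h1r, h2r, hg1, hg2⟩ := h
  have hne : advR Alg (T+1) ≠ advR Alg T := advR_ne Alg T
  have hforcing := p3_forcing (advR_P3 Alg T) hw1 hw2 (advR_P3 Alg (T+1)) h12 h1r h2r hne
  have hb1 := B1_succ Alg hT
  have hb2 := B2_succ Alg hT
  rcases hforcing with h | h
  · obtain ⟨e1, g1⟩ := Bstep_hit (show good (B1 Alg T) (advR Alg T) (advR Alg (T+1)) from h ▸ hg1)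
    have hw2r1 : w2 ≠ advR Alg (T+1) := fun hh => h12 (h.symm.trans hh.symm)
    obtain ⟨g2, _⟩ := Bstep_miss hg2 (fun hh => hw2r1 hh) (Ne.symm hne) h2r
    exact ⟨advR Alg T, w2, advR_P3 Alg T, hw2, Ne.symm h2r, Ne.symm hne, hw2r1,
      by rw [hb1, e1]; exact g1, by rw [hb2]; exact g2⟩
  · obtain ⟨e2, g2⟩ := Bstep_hit (show good (B2 Alg T) (advR Alg T) (advR Alg (T+1)) from h ▸ hg2)
    have hw1r1 : w1 ≠ advR Alg (T+1) := fun hh => h12 (hh.trans h)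
    obtain ⟨g1, _⟩ := Bstep_miss hg1 (fun hh => hw1r1 hh) (Ne.symm hne) h1r
    exact ⟨w1, advR Alg T, hw1, advR_P3 Alg T, h1r, hw1r1, Ne.symm hne,
      by rw [hb1]; exact g1, by rw [hb2, e2]; exact g2⟩

lemma offCost_succ (σ : ℕ → Multiset ℝ) (q : ℕ → ℝ × ℝ) (T : ℕ) :
    offCost σ q (T+1) = offCost σ q T + (moveCost (q T) (q (T+1)) + connCost (σ (T+1)) (q (T+1))) := by
  unfold offCost
  rw [Finset.sum_Icc_succ_top (by omega : 1 ≤ T + 1)]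
  simp

lemma offCost_nonneg (σ : ℕ → Multiset ℝ) (q : ℕ → ℝ × ℝ) (T : ℕ) : 0 ≤ offCost σ q T :=
  Finset.sum_nonneg fun t _ => add_nonneg (moveCost_nonneg _ _) (connCost_nonneg _ _)

lemma optCost_le {x0 : ℝ × ℝ} (σ : ℕ → Multiset ℝ) {q : ℕ → ℝ × ℝ} (hq : q 0 = x0) (T : ℕ) :
    optCost x0 σ T ≤ offCost σ q T :=
  csInf_le ⟨0, fun cc ⟨q', _, hcc⟩ => hcc ▸ offCost_nonneg σ q' T⟩ ⟨q, hq, rfl⟩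

lemma optCost_nonneg (x0 : ℝ × ℝ) (σ : ℕ → Multiset ℝ) (T : ℕ) : 0 ≤ optCost x0 σ T :=
  Real.sInf_nonneg fun cc ⟨q', _, hcc⟩ => hcc ▸ offCost_nonneg σ q' T

lemma conn_zero_of_good {B : ℝ × ℝ} {w : ℝ} (t : ℕ) (hg : good B (advR Alg t) w) :
    connCost (advσ Alg t) B = 0 := by
  rw [show advσ Alg t = Multiset.replicate 4 (advR Alg t) from rfl, connCost_replicate]
  rcases hg with rfl | rfl
  · simp [min_eq_left, abs_nonneg]
  · simp [min_eq_right, abs_nonneg]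

lemma invB_all {T : ℕ} (hT : 1 ≤ T) : InvB Alg T := by
  induction T, hT using Nat.le_induction with
  | base => exact invB_one Alg
  | succ T hT ih => exact invB_succ Alg hT ih

lemma offline_sum {T : ℕ} (hT : 1 ≤ T) :
    offCost (advσ Alg) (B1 Alg) T + offCost (advσ Alg) (B2 Alg) T
      ≤ (∑ t ∈ Finset.Icc 1 T, |advR Alg t - advR Alg (t-1)|) + 2 := by
  induction T, hT using Nat.le_induction with
  | base =>
      have h1 : offCost (advσ Alg) (B1 Alg) 1
          = moveCost (B1 Alg 0) (B1 Alg 1) + connCost (advσ Alg 1) (B1 Alg 1) := by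
        unfold offCost; rw [Finset.Icc_self, Finset.sum_singleton]
      have h2 : offCost (advσ Alg) (B2 Alg) 1
          = moveCost (B2 Alg 0) (B2 Alg 1) + connCost (advσ Alg 1) (B2 Alg 1) := by
        unfold offCost; rw [Finset.Icc_self, Finset.sum_singleton]
      have c1 : connCost (advσ Alg 1) (B1 Alg 1) = 0 :=
        conn_zero_of_good Alg 1 (show good (0, 4) (advR Alg 1) 0 by
          rw [advR_one]; exact Or.inr rfl)
      have c2 : connCost (advσ Alg 1) (B2 Alg 1) = 0 :=
        conn_zero_of_good Alg 1 (show good (4, 2) (advR Alg 1) 2 by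
          rw [advR_one]; exact Or.inl rfl)
      have m1 : moveCost (B1 Alg 0) (B1 Alg 1) = 2 := by
        show moveCost (0, 2) (0, 4) = 2; norm_num [moveCost]
      have m2 : moveCost (B2 Alg 0) (B2 Alg 1) = 4 := by
        show moveCost (0, 2) (4, 2) = 4; norm_num [moveCost]
      have hs : (∑ t ∈ Finset.Icc 1 1, |advR Alg t - advR Alg (t-1)|) = 4 := by
        rw [Finset.Icc_self, Finset.sum_singleton]
        norm_num [advR_one, advR_zero]
      rw [h1, h2, c1, c2, m1, m2, hs]; norm_num
  | succ T hT ih =>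
      obtain ⟨w1, w2, hw1, hw2, h12, h1r, h2r, hg1, hg2⟩ := invB_all Alg hT
      have hne : advR Alg (T+1) ≠ advR Alg T := advR_ne Alg T
      have hforcing := p3_forcing (advR_P3 Alg T) hw1 hw2 (advR_P3 Alg (T+1)) h12 h1r h2r hne
      have hb1 := B1_succ Alg hT
      have hb2 := B2_succ Alg hT
      rw [offCost_succ, offCost_succ, Finset.sum_Icc_succ_top (by omega : 1 ≤ T + 1)]
      have hstep : moveCost (B1 Alg T) (B1 Alg (T+1)) + moveCost (B2 Alg T) (B2 Alg (T+1))
            = |advR Alg (T+1) - advR Alg T| ∧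
          connCost (advσ Alg (T+1)) (B1 Alg (T+1)) = 0 ∧
          connCost (advσ Alg (T+1)) (B2 Alg (T+1)) = 0 := by
        rcases hforcing with h | h
        · obtain ⟨e1, g1⟩ := Bstep_hit
            (show good (B1 Alg T) (advR Alg T) (advR Alg (T+1)) from h ▸ hg1)
          have hw2r1 : w2 ≠ advR Alg (T+1) := fun hh => h12 (h.symm.trans hh.symm)
          obtain ⟨g2, m2⟩ := Bstep_miss hg2 hw2r1 (Ne.symm hne) h2r
          refine ⟨?_, ?_, ?_⟩
          · rw [hb1, hb2, e1, m2]; simp [moveCost]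
          · rw [hb1, e1]; exact conn_zero_of_good Alg (T+1) g1
          · rw [hb2]; exact conn_zero_of_good Alg (T+1) g2
        · obtain ⟨e2, g2⟩ := Bstep_hit
            (show good (B2 Alg T) (advR Alg T) (advR Alg (T+1)) from h ▸ hg2)
          have hw1r1 : w1 ≠ advR Alg (T+1) := fun hh => h12 (hh.trans h)
          obtain ⟨g1, m1⟩ := Bstep_miss hg1 hw1r1 (Ne.symm hne) h1r
          refine ⟨?_, ?_, ?_⟩
          · rw [hb1, hb2, e2, m1]; simp [moveCost]
          · rw [hb1]; exact conn_zero_of_good Alg (T+1) g1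
          · rw [hb2, e2]; exact conn_zero_of_good Alg (T+1) g2
      obtain ⟨hm, hc1, hc2⟩ := hstep
      have : (T + 1 : ℕ) - 1 = T := by omega
      rw [this] at *
      linarith

lemma sum_delta_ge (T : ℕ) :
    2 * T ≤ ∑ t ∈ Finset.Icc 1 T, |advR Alg t - advR Alg (t-1)| := by
  induction T with
  | zero => simp
  | succ T ih =>
      rw [Finset.sum_Icc_succ_top (by omega : 1 ≤ T + 1)]
      have h2 : (2:ℝ) ≤ |advR Alg (T+1) - advR Alg T| :=
        p3_dist (advR_P3 Alg (T+1)) (advR_P3 Alg T) (advR_ne Alg T)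
      push_cast
      push_cast at ih
      linarith

lemma part2 (c : ℝ) (hc : c < 2) : ¬ ∃ Alg, ReallocCompetitive c Alg := by
  rintro ⟨Alg, hOn, A, hA⟩
  set A0 := A x0std with hA0
  -- the main chain, for every T ≥ 1
  have main : ∀ T : ℕ, 1 ≤ T →
      (∑ t ∈ Finset.Icc 1 T, |advR Alg t - advR Alg (t-1)|) - 2
        ≤ c * optCost x0std (advσ Alg) T + A0 ∧
      2 * optCost x0std (advσ Alg) T
        ≤ (∑ t ∈ Finset.Icc 1 T, |advR Alg t - advR Alg (t-1)|) + 2 := by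
    intro T hT
    constructor
    · have h1 := online_lb Alg hOn T
      have h2 := hA x0std (advσ Alg) T
      have h3 : 0 ≤ Phi Alg T := phiW_nonneg _
      have h4 : 0 ≤ Psi Alg T := dm_nonneg _ _
      rw [Phi_zero, Psi_zero] at h1
      linarith
    · have o1 : optCost x0std (advσ Alg) T ≤ offCost (advσ Alg) (B1 Alg) T :=
        optCost_le (advσ Alg) (show B1 Alg 0 = x0std from rfl) T
      have o2 : optCost x0std (advσ Alg) T ≤ offCost (advσ Alg) (B2 Alg) T :=
        optCost_le (advσ Alg) (show B2 Alg 0 = x0std from rfl) T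
      have := offline_sum Alg hT
      linarith
  rcases le_or_gt 0 c with hc0 | hc0
  · -- 0 ≤ c < 2
    obtain ⟨T0, hT0⟩ := exists_nat_gt ((4 + 2 * c + 2 * A0) / (2 * (2 - c)))
    set T := T0 + 1 with hTdef
    obtain ⟨hmain1, hmain2⟩ := main T (by omega)
    set S := ∑ t ∈ Finset.Icc 1 T, |advR Alg t - advR Alg (t-1)| with hS
    have hSge : 2 * (T:ℝ) ≤ S := sum_delta_ge Alg T
    have hopt := optCost_nonneg x0std (advσ Alg) T
    -- S - 2 ≤ c * opt + A0 ≤ c * (S+2)/2 + A0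
    have hco : c * optCost x0std (advσ Alg) T ≤ c * ((S + 2) / 2) :=
      mul_le_mul_of_nonneg_left (by linarith) hc0
    have hfin : S * (2 - c) ≤ 4 + 2 * c + 2 * A0 := by linarith
    have hTT : ((4 + 2 * c + 2 * A0) / (2 * (2 - c))) < (T:ℝ) := by
      have : (T0:ℝ) < T := by rw [hTdef]; push_cast; linarith
      linarith
    have h2c : (0:ℝ) < 2 - c := by linarith
    rw [div_lt_iff₀ (by linarith)] at hTT
    nlinarith
  · -- c < 0
    obtain ⟨T0, hT0⟩ := exists_nat_gt ((A0 + 4) / 2)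
    set T := T0 + 1 with hTdef
    obtain ⟨hmain1, _⟩ := main T (by omega)
    set S := ∑ t ∈ Finset.Icc 1 T, |advR Alg t - advR Alg (t-1)| with hS
    have hSge : 2 * (T:ℝ) ≤ S := sum_delta_ge Alg T
    have hopt := optCost_nonneg x0std (advσ Alg) T
    have hco : c * optCost x0std (advσ Alg) T ≤ 0 :=
      mul_nonpos_iff.mpr (Or.inr ⟨hc0.le, hopt⟩)
    have : (T0:ℝ) < T := by rw [hTdef]; push_cast; linarith
    nlinarith

/-! ### Part 1: transfer construction -/

section Transfer

variable (cc : ℝ) (A : ℝ × ℝ → ℝ)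

/-- explicit offline schedule giving an upper bound on `optCost` -/
def qx (x0 : ℝ × ℝ) (r : ℕ → ℝ) (s : ℕ) : ℝ × ℝ := if s = 0 then x0 else (r s, x0.2)

def Mub (x0 : ℝ × ℝ) (r : ℕ → ℝ) (t : ℕ) : ℝ :=
  ∑ s ∈ Finset.Icc 1 t, moveCost (qx x0 r (s-1)) (qx x0 r s)

def Kf (x0 : ℝ × ℝ) (r : ℕ → ℝ) (t : ℕ) : ℕ :=
  max 1 ⌈(2:ℝ)^t * (|cc| * Mub x0 r t + |A x0| + 1)⌉₊

def σA (x0 : ℝ × ℝ) (r : ℕ → ℝ) : ℕ → Multiset ℝ :=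
  fun s => Multiset.replicate (Kf cc A x0 r s) (r s)

def snap (p : ℝ × ℝ) (u : ℝ) : ℝ × ℝ :=
  if |u - p.1| ≤ |u - p.2| then (u, p.2) else (p.1, u)

def Bsrv : ℝ × ℝ → ℕ → (ℕ → ℝ) → ℝ × ℝ := fun x0 t r =>
  if t = 0 then x0 else snap (Alg x0 t (σA cc A x0 r)) (r t)

lemma moveCost_snap (p : ℝ × ℝ) (u : ℝ) :
    moveCost p (snap p u) = min |u - p.1| |u - p.2| := by
  unfold snap
  split
  · rename_i h; rw [min_eq_left h]; simp [moveCost]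
  · rename_i h; push_neg at h; rw [min_eq_right h.le]; simp [moveCost]

lemma snap_serves (p : ℝ × ℝ) (u : ℝ) : (snap p u).1 = u ∨ (snap p u).2 = u := by
  unfold snap; split
  · exact Or.inl rfl
  · exact Or.inr rfl

lemma Mub_congr {x0 : ℝ × ℝ} {r r' : ℕ → ℝ} {t : ℕ} (h : ∀ s ≤ t, r s = r' s) :
    Mub x0 r t = Mub x0 r' t := by
  unfold Mub
  apply Finset.sum_congr rfl
  intro s hs
  rw [Finset.mem_Icc] at hs
  have e : ∀ j ≤ t, qx x0 r j = qx x0 r' j := by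
    intro j hj
    unfold qx
    split
    · rfl
    · rw [h j hj]
  rw [e (s-1) (by omega), e s (by omega)]

lemma σA_congr {x0 : ℝ × ℝ} {r r' : ℕ → ℝ} {t : ℕ} (h : ∀ s ≤ t, r s = r' s) :
    ∀ s ≤ t, σA cc A x0 r s = σA cc A x0 r' s := by
  intro s hs
  unfold σA Kf
  rw [Mub_congr (fun j hj => h j (le_trans hj hs)), h s hs]

lemma Mub_nonneg (x0 : ℝ × ℝ) (r : ℕ → ℝ) (t : ℕ) : 0 ≤ Mub x0 r t :=
  Finset.sum_nonneg fun s _ => moveCost_nonneg _ _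

lemma Kf_lb (x0 : ℝ × ℝ) (r : ℕ → ℝ) (t : ℕ) :
    (2:ℝ)^t * (|cc| * Mub x0 r t + |A x0| + 1) ≤ (Kf cc A x0 r t : ℝ) := by
  unfold Kf
  calc (2:ℝ)^t * (|cc| * Mub x0 r t + |A x0| + 1)
      ≤ (⌈(2:ℝ)^t * (|cc| * Mub x0 r t + |A x0| + 1)⌉₊ : ℝ) := Nat.le_ceil _
    _ ≤ _ := by exact_mod_cast Nat.cast_le.mpr (le_max_right _ _)


def eN (x0 : ℝ × ℝ) (r : ℕ → ℝ) (t : ℕ) : ℝ :=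
  if t = 0 then 0
  else min |r t - (algPos Alg x0 (σA cc A x0 r) t).1|
         |r t - (algPos Alg x0 (σA cc A x0 r) t).2|

lemma eN_nonneg (x0 : ℝ × ℝ) (r : ℕ → ℝ) (t : ℕ) : 0 ≤ eN Alg cc A x0 r t := by
  unfold eN; split
  · exact le_refl 0
  · exact le_min (abs_nonneg _) (abs_nonneg _)

lemma geo_sum (T : ℕ) :
    ∑ t ∈ Finset.Icc 1 T, (((1:ℝ)/2)^(t-1) + ((1:ℝ)/2)^t) = 3 * (1 - ((1:ℝ)/2)^T) := by
  induction T with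
  | zero => simp
  | succ T ih =>
      rw [Finset.sum_Icc_succ_top (by omega : 1 ≤ T + 1), ih]
      have : (T + 1 : ℕ) - 1 = T := by omega
      rw [this, pow_succ]
      ring

lemma offCost_qx (x0 : ℝ × ℝ) (r : ℕ → ℝ) (t : ℕ) :
    offCost (σA cc A x0 r) (qx x0 r) t = Mub x0 r t := by
  unfold offCost Mub
  apply Finset.sum_congr rfl
  intro s hs
  rw [Finset.mem_Icc] at hs
  have : connCost (σA cc A x0 r s) (qx x0 r s) = 0 := by
    rw [show σA cc A x0 r s = Multiset.replicate (Kf cc A x0 r s) (r s) from rfl,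
      connCost_replicate, show qx x0 r s = (r s, x0.2) from by unfold qx; rw [if_neg (by omega)]]
    simp [min_eq_left, abs_nonneg]
  rw [this, add_zero]

lemma opt_le_Mub (x0 : ℝ × ℝ) (r : ℕ → ℝ) (t : ℕ) :
    optCost x0 (σA cc A x0 r) t ≤ Mub x0 r t := by
  have h := optCost_le (σA cc A x0 r) (show qx x0 r 0 = x0 from rfl) t
  rwa [offCost_qx] at h

lemma conn_term_le (x0 : ℝ × ℝ) (σ : ℕ → Multiset ℝ) {t : ℕ} (ht : 1 ≤ t) :
    connCost (σ t) (algPos Alg x0 σ t) ≤ algCost Alg x0 σ t := by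
  have hmem : t ∈ Finset.Icc 1 t := by rw [Finset.mem_Icc]; omega
  have h := Finset.single_le_sum
    (f := fun s => moveCost (algPos Alg x0 σ (s-1)) (algPos Alg x0 σ s)
      + connCost (σ s) (algPos Alg x0 σ s))
    (fun s _ => add_nonneg (moveCost_nonneg _ _) (connCost_nonneg _ _)) hmem
  have := moveCost_nonneg (algPos Alg x0 σ (t-1)) (algPos Alg x0 σ t)
  unfold algCost
  linarith

lemma eN_le (hOn : OnlineRealloc Alg) (hc : 0 ≤ cc)
    (hA : ∀ x0 σ T, algCost Alg x0 σ T ≤ cc * optCost x0 σ T + A x0)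
    (x0 : ℝ × ℝ) (r : ℕ → ℝ) (t : ℕ) :
    eN Alg cc A x0 r t ≤ ((1:ℝ)/2)^t := by
  unfold eN
  split
  · rename_i h; subst h; norm_num
  · rename_i ht
    set K := Kf cc A x0 r t with hK
    set ρ := |cc| * Mub x0 r t + |A x0| + 1 with hρ
    set e := min |r t - (algPos Alg x0 (σA cc A x0 r) t).1|
      |r t - (algPos Alg x0 (σA cc A x0 r) t).2| with he
    have he0 : 0 ≤ e := le_min (abs_nonneg _) (abs_nonneg _)
    have hρ1 : 1 ≤ ρ := by
      have := Mub_nonneg x0 r t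
      have h1 : 0 ≤ |cc| * Mub x0 r t := mul_nonneg (abs_nonneg _) this
      have h2 : 0 ≤ |A x0| := abs_nonneg _
      linarith
    have hconn : connCost (σA cc A x0 r t) (algPos Alg x0 (σA cc A x0 r) t) = K * e := by
      rw [show σA cc A x0 r t = Multiset.replicate (Kf cc A x0 r t) (r t) from rfl,
        connCost_replicate]
    have hKe : K * e ≤ ρ := by
      have h1 : connCost (σA cc A x0 r t) (algPos Alg x0 (σA cc A x0 r) t)
          ≤ algCost Alg x0 (σA cc A x0 r) t := conn_term_le Alg x0 _ (by omega)
      have h2 := hA x0 (σA cc A x0 r) t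
      have h3 : cc * optCost x0 (σA cc A x0 r) t ≤ cc * Mub x0 r t :=
        mul_le_mul_of_nonneg_left (opt_le_Mub cc A x0 r t) hc
      have h4 : cc * Mub x0 r t ≤ |cc| * Mub x0 r t :=
        mul_le_mul_of_nonneg_right (le_abs_self cc) (Mub_nonneg x0 r t)
      have h5 : A x0 ≤ |A x0| := le_abs_self _
      rw [hconn] at h1
      linarith
    have hKlb : (2:ℝ)^t * ρ ≤ (K : ℝ) := Kf_lb cc A x0 r t
    have hpow : (0:ℝ) < 2^t := pow_pos (by norm_num) t
    have hprod : ((1:ℝ)/2)^t * 2^t = 1 := by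
      rw [← mul_pow]; norm_num
    nlinarith [mul_le_mul_of_nonneg_right hKlb he0, mul_pos hpow (by linarith : (0:ℝ) < ρ)]


lemma opt_le_srvOpt (x0 : ℝ × ℝ) (r : ℕ → ℝ) (T : ℕ) :
    optCost x0 (σA cc A x0 r) T ≤ srvOptCost x0 r T := by
  apply le_csInf
  · refine ⟨_, qx x0 r, rfl, ?_, rfl⟩
    intro t ht
    rw [Finset.mem_Icc] at ht
    left
    unfold qx
    rw [if_neg (by omega)]
  · rintro b ⟨q, hq0, hcov, rfl⟩
    have heq : offCost (σA cc A x0 r) q T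
        = ∑ t ∈ Finset.Icc 1 T, moveCost (q (t-1)) (q t) := by
      unfold offCost
      apply Finset.sum_congr rfl
      intro t ht
      have hzero : connCost (σA cc A x0 r t) (q t) = 0 := by
        rw [show σA cc A x0 r t = Multiset.replicate (Kf cc A x0 r t) (r t) from rfl,
          connCost_replicate]
        rcases hcov t ht with h | h
        · rw [h]; simp [min_eq_left, abs_nonneg]
        · rw [h]; simp [min_eq_right, abs_nonneg]
      rw [hzero, add_zero]
    rw [← heq]
    exact optCost_le _ hq0 T

lemma srvAlgCost_succ (B : ℝ × ℝ → ℕ → (ℕ → ℝ) → ℝ × ℝ) (x0 : ℝ × ℝ) (r : ℕ → ℝ) (T : ℕ) :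
    srvAlgCost B x0 r (T+1)
      = srvAlgCost B x0 r T + moveCost (srvPos B x0 r T) (srvPos B x0 r (T+1)) := by
  unfold srvAlgCost
  rw [Finset.sum_Icc_succ_top (by omega : 1 ≤ T + 1)]
  simp

lemma srv_cost_bound (x0 : ℝ × ℝ) (r : ℕ → ℝ) (T : ℕ) :
    srvAlgCost (Bsrv Alg cc A) x0 r T
      ≤ algCost Alg x0 (σA cc A x0 r) T
        + ∑ t ∈ Finset.Icc 1 T, (eN Alg cc A x0 r (t-1) + eN Alg cc A x0 r t) := by
  induction T with
  | zero => simp [srvAlgCost, algCost]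
  | succ T ih =>
      rw [srvAlgCost_succ, algCost_succ, Finset.sum_Icc_succ_top (by omega : 1 ≤ T + 1)]
      have hxp1 : srvPos (Bsrv Alg cc A) x0 r (T+1)
          = snap (algPos Alg x0 (σA cc A x0 r) (T+1)) (r (T+1)) := by
        show Bsrv Alg cc A x0 (T+1) r = _
        unfold Bsrv
        rw [if_neg (by omega)]
        rfl
      have hsnap1 : moveCost (algPos Alg x0 (σA cc A x0 r) (T+1))
          (snap (algPos Alg x0 (σA cc A x0 r) (T+1)) (r (T+1))) = eN Alg cc A x0 r (T+1) := by
        rw [moveCost_snap]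
        unfold eN
        rw [if_neg (by omega)]
      have hstep : moveCost (srvPos (Bsrv Alg cc A) x0 r T) (srvPos (Bsrv Alg cc A) x0 r (T+1))
          ≤ eN Alg cc A x0 r T
            + moveCost (algPos Alg x0 (σA cc A x0 r) T) (algPos Alg x0 (σA cc A x0 r) (T+1))
            + eN Alg cc A x0 r (T+1) := by
        rcases Nat.eq_zero_or_pos T with rfl | hT
        · have h0 : srvPos (Bsrv Alg cc A) x0 r 0 = x0 := rfl
          have h0' : algPos Alg x0 (σA cc A x0 r) 0 = x0 := rfl
          have htri := moveCost_triangle x0 (algPos Alg x0 (σA cc A x0 r) 1)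
            (snap (algPos Alg x0 (σA cc A x0 r) 1) (r 1))
          have he0 : eN Alg cc A x0 r 0 = 0 := rfl
          rw [hxp1, h0, he0, h0']
          rw [show (0:ℕ)+1 = 1 from rfl] at *
          rw [← hsnap1]
          linarith
        · have hxpT : srvPos (Bsrv Alg cc A) x0 r T
              = snap (algPos Alg x0 (σA cc A x0 r) T) (r T) := by
            obtain ⟨s, rfl⟩ : ∃ s, T = s + 1 := ⟨T - 1, by omega⟩
            show Bsrv Alg cc A x0 (s+1) r = _
            unfold Bsrv
            rw [if_neg (by omega)]
            rfl
          have hsnapT : moveCost (algPos Alg x0 (σA cc A x0 r) T)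
              (snap (algPos Alg x0 (σA cc A x0 r) T) (r T)) = eN Alg cc A x0 r T := by
            rw [moveCost_snap]
            unfold eN
            rw [if_neg (by omega)]
          have htri1 := moveCost_triangle (snap (algPos Alg x0 (σA cc A x0 r) T) (r T))
            (algPos Alg x0 (σA cc A x0 r) T)
            (snap (algPos Alg x0 (σA cc A x0 r) (T+1)) (r (T+1)))
          have htri2 := moveCost_triangle (algPos Alg x0 (σA cc A x0 r) T)
            (algPos Alg x0 (σA cc A x0 r) (T+1))
            (snap (algPos Alg x0 (σA cc A x0 r) (T+1)) (r (T+1)))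
          have hcomm : moveCost (snap (algPos Alg x0 (σA cc A x0 r) T) (r T))
              (algPos Alg x0 (σA cc A x0 r) T) = eN Alg cc A x0 r T := by
            rw [moveCost_comm]; exact hsnapT
          rw [hxp1, hxpT, ← hsnap1]
          linarith
      have hconn := connCost_nonneg (σA cc A x0 r (T+1)) (algPos Alg x0 (σA cc A x0 r) (T+1))
      have : (T + 1 : ℕ) - 1 = T := by omega
      rw [this]
      linarith

lemma transfer (hOn : OnlineRealloc Alg) (hc : 0 ≤ cc)
    (hA : ∀ x0 σ T, algCost Alg x0 σ T ≤ cc * optCost x0 σ T + A x0) :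
    ServerCompetitive cc (Bsrv Alg cc A) := by
  refine ⟨?_, ?_, fun x0 => A x0 + 3, ?_⟩
  · intro x0 t r r' h
    unfold Bsrv
    split
    · rfl
    · rw [hOn x0 t _ _ (σA_congr cc A h), h t le_rfl]
  · intro x0 t r ht
    unfold Bsrv
    rw [if_neg (by omega)]
    exact snap_serves _ _
  · intro x0 r T
    have h1 := srv_cost_bound Alg cc A x0 r T
    have h2 : ∑ t ∈ Finset.Icc 1 T, (eN Alg cc A x0 r (t-1) + eN Alg cc A x0 r t) ≤ 3 := by
      have hle : ∑ t ∈ Finset.Icc 1 T, (eN Alg cc A x0 r (t-1) + eN Alg cc A x0 r t)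
          ≤ ∑ t ∈ Finset.Icc 1 T, (((1:ℝ)/2)^(t-1) + ((1:ℝ)/2)^t) := by
        apply Finset.sum_le_sum
        intro t _
        exact add_le_add (eN_le Alg cc A hOn hc hA x0 r (t-1)) (eN_le Alg cc A hOn hc hA x0 r t)
      rw [geo_sum] at hle
      have : (0:ℝ) ≤ ((1:ℝ)/2)^T := by positivity
      linarith
    have h3 := hA x0 (σA cc A x0 r) T
    have h4 : cc * optCost x0 (σA cc A x0 r) T ≤ cc * srvOptCost x0 r T :=
      mul_le_mul_of_nonneg_left (opt_le_srvOpt cc A x0 r T) hc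
    dsimp only
    linarith

end Transfer

end S19

/-- Lower bound transfer: any c-competitive online algorithm for 2-facility reallocation
on the line yields a c-competitive online algorithm for the 2-server problem on the
line; in particular, since the 2-server problem on the line has competitive ratio at
least 2, no online 2-facility reallocation algorithm is c-competitive for c < 2. -/
theorem stmt19 :
    (∀ c : ℝ, (∃ Alg, ReallocCompetitive c Alg) → ∃ B, ServerCompetitive c B) ∧
    (∀ c : ℝ, c < 2 → ¬ ∃ Alg, ReallocCompetitive c Alg) := by
  constructor
  · intro c hex
    rcases lt_or_ge c 2 with hc2 | hc2
    · exact absurd hex (S19.part2 c hc2)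
    · obtain ⟨Alg, hOn, A, hA⟩ := hex
      exact ⟨S19.Bsrv Alg c A, S19.transfer Alg c A hOn (by linarith) hA⟩
  · exact S19.part2


end
end
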